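/- arXiv:1711.11354 — 2 statements merged into one kernel-verified Lean document; each statement's English description precedes it below -/
import Mathlib

section
/- For all bounded Borel-measurable functions g₁, g₂ : [0,1] → ℝ, sup_{s∈[0,1]} |G*(g₁)(s) − G*(g₂)(s)| ≤ (1 − 2^{−β−1}) · sup_{s∈[0,1]} |g₁(s) − g₂(s)|. -/
open MeasureTheory Set Filter Topology ProbabilityTheory
open scoped Classical

noncomputable section

namespace Quadtree

/-- The exponent `β = (√17 − 3)/2`. -/
def betaQ : ℝ := (Real.sqrt 17 - 3) / 2

/-- The constant `K₁ = Γ(2β+2)Γ(β+2) / (2Γ(β+1)³Γ(β/2+1)²)`. -/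
def K1 : ℝ :=
  Real.Gamma (2 * betaQ + 2) * Real.Gamma (betaQ + 2) /
    (2 * Real.Gamma (betaQ + 1) ^ 3 * Real.Gamma (betaQ / 2 + 1) ^ 2)

/-- The function `h(t) = (t(1−t))^{β/2}`. -/
def hfun (t : ℝ) : ℝ := (t * (1 - t)) ^ (betaQ / 2)

/-- The unit square `[0,1]²`. -/
def unitSq : Set (ℝ × ℝ) := Icc (0:ℝ) 1 ×ˢ Icc (0:ℝ) 1

/-- The uniform distribution on the unit square. -/
def unif2 : Measure (ℝ × ℝ) := volume.restrict unitSq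

/-- The quadrant (inside the unit square) of the point `w` that contains `z`:
south-west `[0,w₁]×[0,w₂]`, north-west `[0,w₁]×(w₂,1]`, south-east `(w₁,1]×[0,w₂]`,
north-east `(w₁,1]×(w₂,1]`. -/
def quadrant (w z : ℝ × ℝ) : Set (ℝ × ℝ) :=
  (if z.1 ≤ w.1 then Icc 0 w.1 else Ioc w.1 1) ×ˢ
    (if z.2 ≤ w.2 then Icc 0 w.2 else Ioc w.2 1)

/-- `cellAt p k z` is the cell containing `z` in the quadtree partition of `[0,1]²`
generated by successive insertion of the points `p 0, …, p (k-1)`. -/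
def cellAt (p : ℕ → ℝ × ℝ) : ℕ → ℝ × ℝ → Set (ℝ × ℝ)
  | 0, _ => unitSq
  | k + 1, z =>
      if p k ∈ cellAt p k z then cellAt p k z ∩ quadrant (p k) z else cellAt p k z

/-- `Rcell p i` is the rectangle of the partition generated by `p 0, …, p (i-1)`
in which the point `p i` is inserted (this is `R_{i+1}` in 1-indexed notation). -/
def Rcell (p : ℕ → ℝ × ℝ) (i : ℕ) : Set (ℝ × ℝ) := cellAt p i (p i)

/-- The half of the unit square (horizontal or vertical split at `w`) containing `z`;
the lower/left piece is closed at the splitting line, the upper/right piece open at it. -/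
def kdHalf (horizontal : Bool) (w z : ℝ × ℝ) : Set (ℝ × ℝ) :=
  if horizontal then
    (if z.2 ≤ w.2 then Icc (0:ℝ) 1 ×ˢ Icc 0 w.2 else Icc (0:ℝ) 1 ×ˢ Ioc w.2 1)
  else
    (if z.1 ≤ w.1 then Icc 0 w.1 ×ˢ Icc (0:ℝ) 1 else Ioc w.1 1 ×ˢ Icc (0:ℝ) 1)

/-- `kdCellAt hRoot p k z` is the pair (cell containing `z`, its depth) in the 2-d tree
partition generated by `p 0, …, p (k-1)`; splits are horizontal at even depths iff
`hRoot = true` ('=' version), and vertical at even depths iff `hRoot = false` ('⊥'). -/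
def kdCellAt (hRoot : Bool) (p : ℕ → ℝ × ℝ) : ℕ → ℝ × ℝ → Set (ℝ × ℝ) × ℕ
  | 0, _ => (unitSq, 0)
  | k + 1, z =>
      let C := kdCellAt hRoot p k z
      if p k ∈ C.1 then
        (C.1 ∩ kdHalf (if C.2 % 2 = 0 then hRoot else !hRoot) (p k) z, C.2 + 1)
      else C

/-- The 2-d tree cell in which `p i` is inserted. -/
def kdRcell (hRoot : Bool) (p : ℕ → ℝ × ℝ) (i : ℕ) : Set (ℝ × ℝ) :=
  (kdCellAt hRoot p i (p i)).1

/-- The query rectangle `Q(a,b,c,d) = (a,b] × (c,d]`. -/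
def Qrect (a b c d : ℝ) : Set (ℝ × ℝ) := Ioc a b ×ˢ Ioc c d

/-- The parameter set `I = {(a,b,c,d) ∈ [0,1]⁴ : a ≤ b, c ≤ d}`. -/
def Iset : Set (ℝ × ℝ × ℝ × ℝ) :=
  {q | 0 ≤ q.1 ∧ q.1 ≤ q.2.1 ∧ q.2.1 ≤ 1 ∧ 0 ≤ q.2.2.1 ∧ q.2.2.1 ≤ q.2.2.2 ∧ q.2.2.2 ≤ 1}

/-- `Vol(a,b,c,d) = (b−a)(d−c)`. -/
def Vol (q : ℝ × ℝ × ℝ × ℝ) : ℝ := (q.2.1 - q.1) * (q.2.2.2 - q.2.2.1)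

/-- The number of indices `i < n` satisfying `A i`, as a real number. -/
def countP (p : ℕ → ℝ × ℝ) (n : ℕ) (A : ℕ → Prop) : ℝ :=
  ((Finset.range n).filter A).card

/-- `O_n(a,b,c,d)`: the cost of the range query with rectangle `Q(a,b,c,d)`, i.e. the
number of points among the first `n` whose insertion cell meets the query rectangle. -/
def Ocount (p : ℕ → ℝ × ℝ) (n : ℕ) (q : ℝ × ℝ × ℝ × ℝ) : ℝ :=
  countP p n fun i => (Rcell p i ∩ Qrect q.1 q.2.1 q.2.2.1 q.2.2.2).Nonempty

/-- The range query cost in the 2-d tree. -/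
def kdOcount (hRoot : Bool) (p : ℕ → ℝ × ℝ) (n : ℕ) (q : ℝ × ℝ × ℝ × ℝ) : ℝ :=
  countP p n fun i => (kdRcell hRoot p i ∩ Qrect q.1 q.2.1 q.2.2.1 q.2.2.2).Nonempty

/-- The vertical segment `{t}×[0,1]`. -/
def vline (t : ℝ) : Set (ℝ × ℝ) := {t} ×ˢ Icc (0:ℝ) 1
/-- The horizontal segment `[0,1]×{s}`. -/
def hlineQ (s : ℝ) : Set (ℝ × ℝ) := Icc (0:ℝ) 1 ×ˢ {s}

/-- `C_n(t)`: the cost of the partial match query at `t`. -/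
def Ccount (p : ℕ → ℝ × ℝ) (n : ℕ) (t : ℝ) : ℝ :=
  countP p n fun i => (Rcell p i ∩ vline t).Nonempty

/-- `C̄_n(t)`: the cost of the horizontal partial match query at `t`. -/
def CbarCount (p : ℕ → ℝ × ℝ) (n : ℕ) (t : ℝ) : ℝ :=
  countP p n fun i => (Rcell p i ∩ hlineQ t).Nonempty

/-- `C_n^≥(t)`: visited nodes whose point has first coordinate at least `t`. -/
def CGe (p : ℕ → ℝ × ℝ) (n : ℕ) (t : ℝ) : ℝ :=
  countP p n fun i => (Rcell p i ∩ vline t).Nonempty ∧ t ≤ (p i).1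

/-- `C_n^<(t) = C_n(t) − C_n^≥(t)`. -/
def CLt (p : ℕ → ℝ × ℝ) (n : ℕ) (t : ℝ) : ℝ := Ccount p n t - CGe p n t

/-- `Y_n(t,s)`: number of insertion cells meeting `{t}×[0,s]`. -/
def Ycount (p : ℕ → ℝ × ℝ) (n : ℕ) (t s : ℝ) : ℝ :=
  countP p n fun i => (Rcell p i ∩ ({t} ×ˢ Icc (0:ℝ) s)).Nonempty

/-- `Ȳ_n(t,s)`: number of insertion cells meeting `[0,s]×{t}`. -/
def YbarCount (p : ℕ → ℝ × ℝ) (n : ℕ) (t s : ℝ) : ℝ :=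
  countP p n fun i => (Rcell p i ∩ (Icc (0:ℝ) s ×ˢ {t})).Nonempty

/-- `Y_n^<(t,s)`. -/
def YLt (p : ℕ → ℝ × ℝ) (n : ℕ) (t s : ℝ) : ℝ :=
  countP p n fun i => p i ∈ Icc (0:ℝ) t ×ˢ Icc (0:ℝ) s ∧ (Rcell p i ∩ vline t).Nonempty

/-- `Y_n^≥(t,s)`. -/
def YGe (p : ℕ → ℝ × ℝ) (n : ℕ) (t s : ℝ) : ℝ :=
  countP p n fun i => p i ∈ Ioc t 1 ×ˢ Icc (0:ℝ) s ∧ (Rcell p i ∩ vline t).Nonempty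

/-- `Ȳ_n^<(s,t)`. -/
def YbarLt (p : ℕ → ℝ × ℝ) (n : ℕ) (s t : ℝ) : ℝ :=
  countP p n fun i => p i ∈ Icc (0:ℝ) t ×ˢ Icc (0:ℝ) s ∧ (Rcell p i ∩ hlineQ s).Nonempty

/-- `Ȳ_n^≥(s,t)`. -/
def YbarGe (p : ℕ → ℝ × ℝ) (n : ℕ) (s t : ℝ) : ℝ :=
  countP p n fun i => p i ∈ Icc (0:ℝ) t ×ˢ Ioc s 1 ∧ (Rcell p i ∩ hlineQ s).Nonempty

/-- `D_n^{(1)}(a,b,c,d)`. -/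
def Dcnt1 (p : ℕ → ℝ × ℝ) (n : ℕ) (a b c d : ℝ) : ℝ :=
  countP p n fun i => p i ∈ Icc (0:ℝ) a ×ˢ Icc (0:ℝ) c ∧ (a, c) ∈ Rcell p i

/-- `D_n^{(2)}(a,b,c,d)`. -/
def Dcnt2 (p : ℕ → ℝ × ℝ) (n : ℕ) (a b c d : ℝ) : ℝ :=
  countP p n fun i => p i ∈ Icc (0:ℝ) a ×ˢ Ioc d 1 ∧ (a, d) ∈ Rcell p i

/-- `D_n^{(3)}(a,b,c,d)`. -/
def Dcnt3 (p : ℕ → ℝ × ℝ) (n : ℕ) (a b c d : ℝ) : ℝ :=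
  countP p n fun i => p i ∈ Ioc b 1 ×ˢ Icc (0:ℝ) c ∧ (b, c) ∈ Rcell p i

/-- `D_n^{(4)}(a,b,c,d)`. -/
def Dcnt4 (p : ℕ → ℝ × ℝ) (n : ℕ) (a b c d : ℝ) : ℝ :=
  countP p n fun i => p i ∈ Ioc b 1 ×ˢ Ioc d 1 ∧ (b, d) ∈ Rcell p i

/-- `N_n(a,b,c,d)`: points falling inside the query rectangle. -/
def Ncount (p : ℕ → ℝ × ℝ) (n : ℕ) (a b c d : ℝ) : ℝ :=
  countP p n fun i => p i ∈ Qrect a b c d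

/-- Supremum norm over the parameter set `I`. -/
def supIset (f : ℝ × ℝ × ℝ × ℝ → ℝ) : ℝ := ⨆ q : Iset, |f q|
/-- Supremum norm over the unit square. -/
def supSq (f : ℝ × ℝ → ℝ) : ℝ := ⨆ ts : unitSq, |f ts|
/-- Supremum norm over `[0,1]`. -/
def supUnit (f : ℝ → ℝ) : ℝ := ⨆ t : Icc (0:ℝ) 1, |f t|

/-- The realization `i ↦ X i ω` of the point sequence. -/
def pts {Ω : Type*} (X : ℕ → Ω → ℝ × ℝ) (ω : Ω) : ℕ → ℝ × ℝ := fun i => X i ω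

/-- `X` is an i.i.d. sequence of uniform random points of `[0,1]²` under `P`. -/
def IsUnifIID {Ω : Type*} [MeasurableSpace Ω] (P : Measure Ω) (X : ℕ → Ω → ℝ × ℝ) : Prop :=
  (∀ i, Measurable (X i)) ∧ iIndepFun X P ∧
    ∀ i, Measure.map (X i) P = unif2

/-- `S n → 0` in probability. -/
def TendstoZeroInProb {Ω : Type*} [MeasurableSpace Ω] (P : Measure Ω) (S : ℕ → Ω → ℝ) : Prop :=
  ∀ ε : ℝ, 0 < ε → Tendsto (fun n => P {ω | ε ≤ |S n ω|}) atTop (𝓝 0)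

/-- `E[|S n|^p] → 0`. -/
def TendstoZeroLp {Ω : Type*} [MeasurableSpace Ω] (P : Measure Ω) (S : ℕ → Ω → ℝ) (p : ℝ) : Prop :=
  Tendsto (fun n => ∫⁻ ω, ENNReal.ofReal (|S n ω| ^ p) ∂P) atTop (𝓝 0)


/-- The four quadrant pieces of the set `S` split at the point `w`
(south-west, north-west, south-east, north-east). -/
def quadPiece (w : ℝ × ℝ) (S : Set (ℝ × ℝ)) : Fin 4 → Set (ℝ × ℝ)
  | 0 => S ∩ (Icc 0 w.1 ×ˢ Icc 0 w.2)
  | 1 => S ∩ (Icc 0 w.1 ×ˢ Ioc w.2 1)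
  | 2 => S ∩ (Ioc w.1 1 ×ˢ Icc 0 w.2)
  | 3 => S ∩ (Ioc w.1 1 ×ˢ Ioc w.2 1)

/-- The first point of the sequence `p` lying in `S` (junk value if there is none). -/
def firstIn (p : ℕ → ℝ × ℝ) (S : Set (ℝ × ℝ)) : ℝ × ℝ :=
  if h : ∃ i, p i ∈ S then p (Nat.find h) else 0

/-- Auxiliary: `Q_v` with the word read in reverse (last letter first). -/
def QvRev (p : ℕ → ℝ × ℝ) : List (Fin 4) → Set (ℝ × ℝ)
  | [] => unitSq
  | r :: v => quadPiece (firstIn p (QvRev p v)) (QvRev p v) r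

/-- The region `Q_v` of the quadtree indexed by the word `v ∈ 𝕋 = ∪ₖ {1,2,3,4}ᵏ`;
the children of `v` are `v ++ [r]`, `r : Fin 4`, and `Q_v` is split at the first
point of the sequence falling into it. -/
def Qv (p : ℕ → ℝ × ℝ) (v : List (Fin 4)) : Set (ℝ × ℝ) := QvRev p v.reverse

/-- `A_v = area(Q_v)/area(Q_{v̄})`. -/
def Av (p : ℕ → ℝ × ℝ) (v : List (Fin 4)) : ℝ :=
  (volume (Qv p v)).toReal / (volume (Qv p v.dropLast)).toReal

/-- Real-valued indicator function. -/
def indic {α : Type*} (S : Set α) (x : α) : ℝ := if x ∈ S then 1 else 0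

/-- `φ_T(t) = 1_T(t)·(t − inf T)/(sup T − inf T)`. -/
def phiOf (T : Set ℝ) (t : ℝ) : ℝ := indic T t * ((t - sInf T) / (sSup T - sInf T))

/-- The time transformation `φ_v` (first coordinate). -/
def phi1 (S : Set (ℝ × ℝ)) (t : ℝ) : ℝ := phiOf (Prod.fst '' S) t
/-- The time transformation `φ'_v` (second coordinate). -/
def phi2 (S : Set (ℝ × ℝ)) (s : ℝ) : ℝ := phiOf (Prod.snd '' S) s

/-- `(U^v, V^v)`: rescaled position of the first point inserted into `Q_v`. -/
def UVv (p : ℕ → ℝ × ℝ) (v : List (Fin 4)) : ℝ × ℝ :=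
  (phi1 (Qv p v) (firstIn p (Qv p v)).1, phi2 (Qv p v) (firstIn p (Qv p v)).2)

/-- The operators `B_r^v`, `r = 1,…,4`. -/
def Bop (p : ℕ → ℝ × ℝ) (v : List (Fin 4)) : Fin 4 → ((ℝ × ℝ) → ℝ) → (ℝ × ℝ) → ℝ
  | 0, f, ts =>
      Av p (v ++ [0]) ^ betaQ *
        (indic (Qv p (v ++ [0])) ts *
            f (phi1 (Qv p (v ++ [0])) ts.1, phi2 (Qv p (v ++ [0])) ts.2) +
          indic (Qv p (v ++ [1])) ts * f (phi1 (Qv p (v ++ [0])) ts.1, 1))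
  | 1, f, ts =>
      Av p (v ++ [1]) ^ betaQ * indic (Qv p (v ++ [1])) ts *
        f (phi1 (Qv p (v ++ [1])) ts.1, phi2 (Qv p (v ++ [1])) ts.2)
  | 2, f, ts =>
      Av p (v ++ [2]) ^ betaQ *
        (indic (Qv p (v ++ [2])) ts *
            f (phi1 (Qv p (v ++ [2])) ts.1, phi2 (Qv p (v ++ [2])) ts.2) +
          indic (Qv p (v ++ [3])) ts * f (phi1 (Qv p (v ++ [2])) ts.1, 1))
  | 3, f, ts =>
      Av p (v ++ [3]) ^ betaQ * indic (Qv p (v ++ [3])) ts *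
        f (phi1 (Qv p (v ++ [3])) ts.1, phi2 (Qv p (v ++ [3])) ts.2)

/-- The iterates `𝒴_n^v`: `𝒴₀^v(t,s) = K₁h(t)`, `𝒴_{n+1}^v = Σ_r B_r^v(𝒴_n^{vr})`. -/
def Yiter (p : ℕ → ℝ × ℝ) : ℕ → List (Fin 4) → (ℝ × ℝ) → ℝ
  | 0, _, ts => K1 * hfun ts.1
  | n + 1, v, ts => ∑ r : Fin 4, Bop p v r (Yiter p n (v ++ [r])) ts

/-- `φ` for the lower part: `1_{[0,u]}(t)·t/u`. -/
def philow (u t : ℝ) : ℝ := indic (Icc (0:ℝ) u) t * (t / u)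
/-- `φ` for the upper part: `1_{(u,1]}(t)·(t−u)/(1−u)`. -/
def phihigh (u t : ℝ) : ℝ := indic (Ioc u 1) t * ((t - u) / (1 - u))

/-- The root operators `B₁,…,B₄` built from a splitting point `(u,v)`. -/
def BopUV (u v : ℝ) : Fin 4 → ((ℝ × ℝ) → ℝ) → (ℝ × ℝ) → ℝ
  | 0, f, ts =>
      (u * v) ^ betaQ *
        (indic (Icc (0:ℝ) u ×ˢ Icc (0:ℝ) v) ts * f (philow u ts.1, philow v ts.2) +
          indic (Icc (0:ℝ) u ×ˢ Ioc v 1) ts * f (philow u ts.1, 1))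
  | 1, f, ts =>
      (u * (1 - v)) ^ betaQ * indic (Icc (0:ℝ) u ×ˢ Ioc v 1) ts *
        f (philow u ts.1, phihigh v ts.2)
  | 2, f, ts =>
      ((1 - u) * v) ^ betaQ *
        (indic (Ioc u 1 ×ˢ Icc (0:ℝ) v) ts * f (phihigh u ts.1, philow v ts.2) +
          indic (Ioc u 1 ×ˢ Ioc v 1) ts * f (phihigh u ts.1, 1))
  | 3, f, ts =>
      ((1 - u) * (1 - v)) ^ betaQ * indic (Ioc u 1 ×ˢ Ioc v 1) ts *
        f (phihigh u ts.1, phihigh v ts.2)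

/-- The coordinate-swapped root operators `B̄₁,…,B̄₄`. -/
def BbarUV (u v : ℝ) : Fin 4 → ((ℝ × ℝ) → ℝ) → (ℝ × ℝ) → ℝ
  | 0, f, ts =>
      (u * v) ^ betaQ *
        (indic (Icc (0:ℝ) v ×ˢ Icc (0:ℝ) u) ts * f (philow v ts.1, philow u ts.2) +
          indic (Icc (0:ℝ) v ×ˢ Ioc u 1) ts * f (philow v ts.1, 1))
  | 1, f, ts =>
      (u * (1 - v)) ^ betaQ *
        (indic (Ioc v 1 ×ˢ Icc (0:ℝ) u) ts * f (phihigh v ts.1, philow u ts.2) +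
          indic (Ioc v 1 ×ˢ Ioc u 1) ts * f (phihigh v ts.1, 1))
  | 2, f, ts =>
      ((1 - u) * v) ^ betaQ * indic (Icc (0:ℝ) v ×ˢ Ioc u 1) ts *
        f (philow v ts.1, phihigh u ts.2)
  | 3, f, ts =>
      ((1 - u) * (1 - v)) ^ betaQ * indic (Ioc v 1 ×ˢ Ioc u 1) ts *
        f (phihigh v ts.1, phihigh u ts.2)

/-- `A_r`, `r = 1,…,4`. -/
def Acoef (u v : ℝ) : Fin 4 → ℝ
  | 0 => u * v
  | 1 => u * (1 - v)
  | 2 => (1 - u) * v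
  | 3 => (1 - u) * (1 - v)

/-- `Q_r^{(1)}`. -/
def proj1Set (u : ℝ) : Fin 4 → Set ℝ
  | 0 => Icc 0 u
  | 1 => Icc 0 u
  | 2 => Ioc u 1
  | 3 => Ioc u 1

/-- `Q_r^{(2)}`. -/
def proj2Set (v : ℝ) : Fin 4 → Set ℝ
  | 0 => Icc 0 v
  | 1 => Ioc v 1
  | 2 => Icc 0 v
  | 3 => Ioc v 1

/-- `φ_r`. -/
def phiH (u : ℝ) : Fin 4 → ℝ → ℝ
  | 0 => philow u
  | 1 => philow u
  | 2 => phihigh u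
  | 3 => phihigh u

/-- `φ'_r`. -/
def phiV (v : ℝ) : Fin 4 → ℝ → ℝ
  | 0 => philow v
  | 1 => phihigh v
  | 2 => philow v
  | 3 => phihigh v

/-- `π_r`, lower version: `min(x,u)/u`. -/
def piLow (u x : ℝ) : ℝ := min x u / u
/-- `π_r`, upper version: `max(x−u,0)/(1−u)`. -/
def piHigh (u x : ℝ) : ℝ := max (x - u) 0 / (1 - u)

/-- The random linear operators `D₁,…,D₄` on `C₄⁺`, built from a splitting point `(u,v)`. -/
def Dop (u v : ℝ) : Fin 4 → ((ℝ × ℝ × ℝ × ℝ) → ℝ) → (ℝ × ℝ × ℝ × ℝ) → ℝ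
  | 0, f, q =>
      (u * v) ^ betaQ * (if q.1 ≤ u ∧ q.2.2.1 ≤ v then (1:ℝ) else 0) *
        f (piLow u q.1, piLow u q.2.1, piLow v q.2.2.1, piLow v q.2.2.2)
  | 1, f, q =>
      (u * (1 - v)) ^ betaQ * (if q.1 ≤ u ∧ v < q.2.2.2 then (1:ℝ) else 0) *
        f (piLow u q.1, piLow u q.2.1, piHigh v q.2.2.1, piHigh v q.2.2.2)
  | 2, f, q =>
      ((1 - u) * v) ^ betaQ * (if u < q.2.1 ∧ q.2.2.1 ≤ v then (1:ℝ) else 0) *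
        f (piHigh u q.1, piHigh u q.2.1, piLow v q.2.2.1, piLow v q.2.2.2)
  | 3, f, q =>
      ((1 - u) * (1 - v)) ^ betaQ * (if u < q.2.1 ∧ v < q.2.2.2 then (1:ℝ) else 0) *
        f (piHigh u q.1, piHigh u q.2.1, piHigh v q.2.2.1, piHigh v q.2.2.2)

/-- The coordinate swap `λ(a,b,c,d) = (c,d,a,b)`. -/
def lamSwap (q : ℝ × ℝ × ℝ × ℝ) : ℝ × ℝ × ℝ × ℝ := (q.2.2.1, q.2.2.2, q.1, q.2.1)

/-- The random linear operators `D₁^=, D₂^=` on `C₄⁺`, built from a split `v`. -/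
def DeqOp (v : ℝ) : Fin 2 → ((ℝ × ℝ × ℝ × ℝ) → ℝ) → (ℝ × ℝ × ℝ × ℝ) → ℝ
  | 0, f, q =>
      v ^ betaQ * (if q.2.2.1 ≤ v then (1:ℝ) else 0) *
        f (q.1, q.2.1, q.2.2.1 / v, min q.2.2.2 v / v)
  | 1, f, q =>
      (1 - v) ^ betaQ * (if v < q.2.2.2 then (1:ℝ) else 0) *
        f (q.1, q.2.1, max (q.2.2.1 - v) 0 / (1 - v), (q.2.2.2 - v) / (1 - v))

/-- The operator `G*`. -/
def Gstar (y : ℝ → ℝ) (s : ℝ) : ℝ :=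
  ((betaQ + 1) / 2) *
      ((∫ v in s..1, v ^ betaQ * y (s / v)) +
        ∫ v in (0:ℝ)..s, (1 - v) ^ betaQ * y ((s - v) / (1 - v))) +
    s ^ (betaQ + 1) / 2


lemma betaQ_nonneg : 0 ≤ betaQ := by
  have h : Real.sqrt 17 ^ 2 = 17 := Real.sq_sqrt (by norm_num)
  have h0 := Real.sqrt_nonneg 17
  unfold betaQ; nlinarith

lemma betaQ_gt_neg_one : (-1 : ℝ) < betaQ := by linarith [betaQ_nonneg]

/-- Measurable extension of a function with measurable restriction to `[0,1]`. -/
def ext01 (g : ℝ → ℝ) : ℝ → ℝ :=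
  Function.extend (Subtype.val : Icc (0:ℝ) 1 → ℝ) ((Icc (0:ℝ) 1).restrict g) (fun _ => 0)

lemma ext01_measurable {g : ℝ → ℝ} (hg : Measurable ((Icc (0:ℝ) 1).restrict g)) :
    Measurable (ext01 g) :=
  (MeasurableEmbedding.subtype_coe measurableSet_Icc).measurable_extend hg measurable_const

lemma ext01_eq (g : ℝ → ℝ) {x : ℝ} (hx : x ∈ Icc (0:ℝ) 1) : ext01 g x = g x := by
  have h := Subtype.coe_injective.extend_apply ((Icc (0:ℝ) 1).restrict g) (fun _ => 0)
      (⟨x, hx⟩ : Icc (0:ℝ) 1)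
  exact h

lemma bddMeasInt {f : ℝ → ℝ} (hf : Measurable f) {a b C : ℝ} (hab : a ≤ b)
    (hC : ∀ v ∈ Icc a b, |f v| ≤ C) : IntervalIntegrable f volume a b := by
  have h1 : IntegrableOn f (Icc a b) volume := by
    apply Measure.integrableOn_of_bounded (measure_Icc_lt_top).ne hf.aestronglyMeasurable
    exact (ae_restrict_iff' measurableSet_Icc).2
      (ae_of_all _ (by simpa [Real.norm_eq_abs] using hC))
  exact (intervalIntegrable_iff_integrableOn_Icc_of_le hab).2 h1

lemma memdiv1 {s v : ℝ} (hs : 0 ≤ s) (hv : v ∈ Icc s 1) : s / v ∈ Icc (0:ℝ) 1 := by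
  rcases eq_or_lt_of_le (le_trans hs hv.1) with h | h
  · rw [← h, div_zero]; exact ⟨le_refl _, zero_le_one⟩
  · exact ⟨div_nonneg hs h.le, (div_le_one h).2 hv.1⟩

lemma memdiv2 {s v : ℝ} (hs1 : s ≤ 1) (hv : v ∈ Icc (0:ℝ) s) :
    (s - v) / (1 - v) ∈ Icc (0:ℝ) 1 := by
  rcases eq_or_lt_of_le (le_trans hv.2 hs1) with h | h
  · rw [h, sub_self, div_zero]; exact ⟨le_refl _, zero_le_one⟩
  · have h1 : 0 < 1 - v := by linarith
    exact ⟨div_nonneg (by linarith [hv.2]) h1.le, (div_le_one h1).2 (by linarith)⟩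


/-- The operator `G*` is a contraction with factor `1 − 2^{−β−1}` on
bounded Borel-measurable functions on `[0,1]`, in the supremum norm. -/
theorem stmt17 (g1 g2 : ℝ → ℝ)
    (hg1meas : Measurable ((Icc (0:ℝ) 1).restrict g1))
    (hg2meas : Measurable ((Icc (0:ℝ) 1).restrict g2))
    (hg1bdd : ∃ M : ℝ, ∀ s ∈ Icc (0:ℝ) 1, |g1 s| ≤ M)
    (hg2bdd : ∃ M : ℝ, ∀ s ∈ Icc (0:ℝ) 1, |g2 s| ≤ M) :
    (⨆ s : Icc (0:ℝ) 1, |Gstar g1 s - Gstar g2 s|)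
      ≤ (1 - 2 ^ (-betaQ - 1)) * ⨆ s : Icc (0:ℝ) 1, |g1 s - g2 s| := by
  obtain ⟨M1, hM1⟩ := hg1bdd
  obtain ⟨M2, hM2⟩ := hg2bdd
  haveI : Nonempty (Icc (0:ℝ) 1) := ⟨⟨0, by norm_num⟩⟩
  set M : ℝ := ⨆ s : Icc (0:ℝ) 1, |g1 s - g2 s| with hMdef
  have hbdd : BddAbove (Set.range fun s : Icc (0:ℝ) 1 => |g1 s - g2 s|) := by
    refine ⟨M1 + M2, ?_⟩
    rintro x ⟨⟨t, ht⟩, rfl⟩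
    calc |g1 t - g2 t| ≤ |g1 t| + |g2 t| := abs_sub _ _
      _ ≤ M1 + M2 := add_le_add (hM1 t ht) (hM2 t ht)
  have hM : ∀ x ∈ Icc (0:ℝ) 1, |g1 x - g2 x| ≤ M := fun x hx => le_ciSup hbdd ⟨x, hx⟩
  have hM0 : 0 ≤ M := le_trans (abs_nonneg _) (hM 0 (by norm_num))
  have hb0 := betaQ_nonneg
  have hbp : (0:ℝ) < betaQ + 1 := by linarith
  apply ciSup_le
  rintro ⟨s, hs⟩
  show |Gstar g1 s - Gstar g2 s| ≤ _
  -- membership facts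
  have hmem1 : ∀ v ∈ Icc s 1, s / v ∈ Icc (0:ℝ) 1 := fun v hv => memdiv1 hs.1 hv
  have hmem2 : ∀ v ∈ Icc (0:ℝ) s, (s - v) / (1 - v) ∈ Icc (0:ℝ) 1 :=
    fun v hv => memdiv2 hs.2 hv
  -- rewrite Gstar with measurable extensions
  have hcongr : ∀ g : ℝ → ℝ, Gstar g s =
      ((betaQ + 1) / 2) *
        ((∫ v in s..1, v ^ betaQ * ext01 g (s / v)) +
          ∫ v in (0:ℝ)..s, (1 - v) ^ betaQ * ext01 g ((s - v) / (1 - v))) +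
        s ^ (betaQ + 1) / 2 := by
    intro g
    unfold Gstar
    rw [intervalIntegral.integral_congr (g := fun v => v ^ betaQ * ext01 g (s / v))
        (fun v hv => by simp only [ext01_eq g (hmem1 v (by rwa [uIcc_of_le hs.2] at hv))]),
      intervalIntegral.integral_congr
        (f := fun v => (1 - v) ^ betaQ * g ((s - v) / (1 - v)))
        (g := fun v => (1 - v) ^ betaQ * ext01 g ((s - v) / (1 - v)))
        (fun v hv => by simp only [ext01_eq g (hmem2 v (by rwa [uIcc_of_le hs.1] at hv))])]
  -- integrability
  have hint1 : ∀ (f : ℝ → ℝ) (Mf : ℝ), Measurable f →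
      (∀ x ∈ Icc (0:ℝ) 1, |f x| ≤ Mf) →
      IntervalIntegrable (fun v => v ^ betaQ * f (s / v)) volume s 1 := by
    intro f Mf hfm hfb
    refine bddMeasInt ?_ hs.2 (C := Mf) ?_
    · exact ((Real.continuous_rpow_const hb0).measurable).mul
        (hfm.comp (measurable_const.div measurable_id))
    · intro v hv
      have h1 := hmem1 v hv
      have hvn : 0 ≤ v := le_trans hs.1 hv.1
      rw [abs_mul, abs_of_nonneg (Real.rpow_nonneg hvn _)]
      have hle1 : v ^ betaQ ≤ 1 := Real.rpow_le_one hvn hv.2 hb0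
      nlinarith [abs_nonneg (f (s / v)), hfb _ h1, Real.rpow_nonneg hvn betaQ]
  have hint2 : ∀ (f : ℝ → ℝ) (Mf : ℝ), Measurable f →
      (∀ x ∈ Icc (0:ℝ) 1, |f x| ≤ Mf) →
      IntervalIntegrable (fun v => (1 - v) ^ betaQ * f ((s - v) / (1 - v)))
        volume 0 s := by
    intro f Mf hfm hfb
    refine bddMeasInt ?_ hs.1 (C := Mf) ?_
    · exact (((Real.continuous_rpow_const hb0).measurable).comp
        (measurable_const.sub measurable_id)).mul
        (hfm.comp
          ((measurable_const.sub measurable_id).div (measurable_const.sub measurable_id)))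
    · intro v hv
      have h1 := hmem2 v hv
      have hvn : 0 ≤ 1 - v := by linarith [hv.2, hs.2]
      rw [abs_mul, abs_of_nonneg (Real.rpow_nonneg hvn _)]
      have hle1 : (1 - v) ^ betaQ ≤ 1 := Real.rpow_le_one hvn (by linarith [hv.1]) hb0
      nlinarith [abs_nonneg (f ((s - v) / (1 - v))), hfb _ h1, Real.rpow_nonneg hvn betaQ]
  have hextb : ∀ (g : ℝ → ℝ) (Mg : ℝ), (∀ x ∈ Icc (0:ℝ) 1, |g x| ≤ Mg) →
      ∀ x ∈ Icc (0:ℝ) 1, |ext01 g x| ≤ Mg := by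
    intro g Mg hgb x hx; rw [ext01_eq g hx]; exact hgb x hx
  have I1 := hint1 (ext01 g1) M1 (ext01_measurable hg1meas) (hextb g1 M1 hM1)
  have I2 := hint1 (ext01 g2) M2 (ext01_measurable hg2meas) (hextb g2 M2 hM2)
  have J1 := hint2 (ext01 g1) M1 (ext01_measurable hg1meas) (hextb g1 M1 hM1)
  have J2 := hint2 (ext01 g2) M2 (ext01_measurable hg2meas) (hextb g2 M2 hM2)
  set dd : ℝ → ℝ := fun x => ext01 g1 x - ext01 g2 x with hdd
  have hddmeas : Measurable dd := (ext01_measurable hg1meas).sub (ext01_measurable hg2meas)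
  have hddM : ∀ x ∈ Icc (0:ℝ) 1, |dd x| ≤ M := by
    intro x hx
    rw [hdd]
    simp only [ext01_eq g1 hx, ext01_eq g2 hx]
    exact hM x hx
  have Kd1 := hint1 dd M hddmeas hddM
  have Kd2 := hint2 dd M hddmeas hddM
  have e3 : (∫ v in s..1, v ^ betaQ * ext01 g1 (s / v)) -
      (∫ v in s..1, v ^ betaQ * ext01 g2 (s / v)) =
      ∫ v in s..1, v ^ betaQ * dd (s / v) := by
    rw [← intervalIntegral.integral_sub I1 I2]
    congr 1; funext v; rw [hdd]; ring
  have e4 : (∫ v in (0:ℝ)..s, (1 - v) ^ betaQ * ext01 g1 ((s - v) / (1 - v))) -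
      (∫ v in (0:ℝ)..s, (1 - v) ^ betaQ * ext01 g2 ((s - v) / (1 - v))) =
      ∫ v in (0:ℝ)..s, (1 - v) ^ betaQ * dd ((s - v) / (1 - v)) := by
    rw [← intervalIntegral.integral_sub J1 J2]
    congr 1; funext v; rw [hdd]; ring
  have ed : Gstar g1 s - Gstar g2 s = ((betaQ + 1) / 2) *
      ((∫ v in s..1, v ^ betaQ * dd (s / v)) +
        ∫ v in (0:ℝ)..s, (1 - v) ^ betaQ * dd ((s - v) / (1 - v))) := by
    rw [hcongr g1, hcongr g2, ← e3, ← e4]; ring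
  -- constant-bound integrals
  have pint : IntervalIntegrable (fun v => v ^ betaQ * M) volume s 1 :=
    hint1 (fun _ => M) M measurable_const
      (fun x _ => by rw [abs_of_nonneg hM0])
  have qint : IntervalIntegrable (fun v => (1 - v) ^ betaQ * M) volume 0 s :=
    hint2 (fun _ => M) M measurable_const
      (fun x _ => by rw [abs_of_nonneg hM0])
  have ev1 : (∫ v in s..1, v ^ betaQ * M) = M * ((1 - s ^ (betaQ + 1)) / (betaQ + 1)) := by
    rw [intervalIntegral.integral_mul_const, integral_rpow (Or.inl betaQ_gt_neg_one),
      Real.one_rpow]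
    ring
  have ev2 : (∫ v in (0:ℝ)..s, (1 - v) ^ betaQ * M) =
      M * ((1 - (1 - s) ^ (betaQ + 1)) / (betaQ + 1)) := by
    rw [intervalIntegral.integral_comp_sub_left (fun u => u ^ betaQ * M) 1, sub_zero,
      intervalIntegral.integral_mul_const, integral_rpow (Or.inl betaQ_gt_neg_one),
      Real.one_rpow]
    ring
  have b1 : |∫ v in s..1, v ^ betaQ * dd (s / v)| ≤
      M * ((1 - s ^ (betaQ + 1)) / (betaQ + 1)) := by
    rw [← ev1]
    calc |∫ v in s..1, v ^ betaQ * dd (s / v)|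
        ≤ ∫ v in s..1, |v ^ betaQ * dd (s / v)| := by
          simpa only [Real.norm_eq_abs] using
            intervalIntegral.norm_integral_le_integral_norm
              (f := fun v => v ^ betaQ * dd (s / v)) (μ := volume) hs.2
      _ ≤ ∫ v in s..1, v ^ betaQ * M := by
          apply intervalIntegral.integral_mono_on hs.2 Kd1.abs pint
          intro v hv
          have hvn : 0 ≤ v := le_trans hs.1 hv.1
          rw [abs_mul, abs_of_nonneg (Real.rpow_nonneg hvn _)]
          exact mul_le_mul_of_nonneg_left (hddM _ (hmem1 v hv)) (Real.rpow_nonneg hvn _)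
  have b2 : |∫ v in (0:ℝ)..s, (1 - v) ^ betaQ * dd ((s - v) / (1 - v))| ≤
      M * ((1 - (1 - s) ^ (betaQ + 1)) / (betaQ + 1)) := by
    rw [← ev2]
    calc |∫ v in (0:ℝ)..s, (1 - v) ^ betaQ * dd ((s - v) / (1 - v))|
        ≤ ∫ v in (0:ℝ)..s, |(1 - v) ^ betaQ * dd ((s - v) / (1 - v))| := by
          simpa only [Real.norm_eq_abs] using
            intervalIntegral.norm_integral_le_integral_norm
              (f := fun v => (1 - v) ^ betaQ * dd ((s - v) / (1 - v))) (μ := volume) hs.1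
      _ ≤ ∫ v in (0:ℝ)..s, (1 - v) ^ betaQ * M := by
          apply intervalIntegral.integral_mono_on hs.1 Kd2.abs qint
          intro v hv
          have hvn : 0 ≤ 1 - v := by linarith [hv.2, hs.2]
          rw [abs_mul, abs_of_nonneg (Real.rpow_nonneg hvn _)]
          exact mul_le_mul_of_nonneg_left (hddM _ (hmem2 v hv)) (Real.rpow_nonneg hvn _)
  -- convexity: s^p + (1-s)^p ≥ 2^(1-p)
  have hconv : (2:ℝ) ^ (-betaQ) ≤ s ^ (betaQ + 1) + (1 - s) ^ (betaQ + 1) := by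
    have hc := (convexOn_rpow (p := betaQ + 1) (by linarith)).2
      (mem_Ici.2 hs.1) (mem_Ici.2 (by linarith [hs.2] : (0:ℝ) ≤ 1 - s))
      (by norm_num : (0:ℝ) ≤ 1 / 2) (by norm_num : (0:ℝ) ≤ 1 / 2) (by norm_num)
    simp only [smul_eq_mul] at hc
    have h2 : (1 / 2 : ℝ) * s + 1 / 2 * (1 - s) = 1 / 2 := by ring
    rw [h2] at hc
    have h3 : ((1:ℝ) / 2) ^ (betaQ + 1) = 2 ^ (-(betaQ + 1)) := by
      rw [show ((1:ℝ) / 2) = 2⁻¹ by norm_num, Real.inv_rpow (by norm_num : (0:ℝ) ≤ 2),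
        ← Real.rpow_neg (by norm_num : (0:ℝ) ≤ 2)]
    rw [h3] at hc
    have h4 : (2:ℝ) ^ (-betaQ) = 2 ^ (-(betaQ + 1)) * 2 := by
      rw [show -betaQ = -(betaQ + 1) + 1 by ring,
        Real.rpow_add_one (by norm_num : (2:ℝ) ≠ 0)]
    rw [h4]
    linarith
  -- put it together
  rw [ed]
  have hA : (0:ℝ) ≤ (betaQ + 1) / 2 := by linarith
  have hp0 : betaQ + 1 ≠ 0 := ne_of_gt hbp
  have hexp : (-betaQ - 1 : ℝ) = -(betaQ + 1) := by ring
  have h4' : (2:ℝ) ^ (-betaQ) = 2 ^ (-(betaQ + 1)) * 2 := by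
    rw [show -betaQ = -(betaQ + 1) + 1 by ring,
      Real.rpow_add_one (by norm_num : (2:ℝ) ≠ 0)]
  calc |((betaQ + 1) / 2) * ((∫ v in s..1, v ^ betaQ * dd (s / v)) +
        ∫ v in (0:ℝ)..s, (1 - v) ^ betaQ * dd ((s - v) / (1 - v)))|
      = ((betaQ + 1) / 2) * |(∫ v in s..1, v ^ betaQ * dd (s / v)) +
        ∫ v in (0:ℝ)..s, (1 - v) ^ betaQ * dd ((s - v) / (1 - v))| := by
        rw [abs_mul, abs_of_nonneg hA]
    _ ≤ ((betaQ + 1) / 2) * (|∫ v in s..1, v ^ betaQ * dd (s / v)| +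
        |∫ v in (0:ℝ)..s, (1 - v) ^ betaQ * dd ((s - v) / (1 - v))|) :=
        mul_le_mul_of_nonneg_left (abs_add_le _ _) hA
    _ ≤ ((betaQ + 1) / 2) * (M * ((1 - s ^ (betaQ + 1)) / (betaQ + 1)) +
        M * ((1 - (1 - s) ^ (betaQ + 1)) / (betaQ + 1))) :=
        mul_le_mul_of_nonneg_left (add_le_add b1 b2) hA
    _ = M * (2 - (s ^ (betaQ + 1) + (1 - s) ^ (betaQ + 1))) / 2 := by
        field_simp
        ring
    _ ≤ (1 - 2 ^ (-betaQ - 1)) * M := by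
        rw [hexp]
        nlinarith [hconv, hM0, h4']


end Quadtree
end
end

section
/- There exists exactly one bounded Borel-measurable function g : [0,1] → ℝ satisfying g = G*(g), i.e. g(s) = ((β+1)/2)·(∫_s^1 v^β g(s/v) dv + ∫_0^s (1−v)^β g((s−v)/(1−v)) dv) + s^{β+1}/2 for all s ∈ [0,1]. Moreover, this g is continuous, monotonically increasing, a bijection of [0,1] onto [0,1], and satisfies g(s) = 1 − g(1−s) for every s ∈ [0,1]. -/
open MeasureTheory Set Filter Topology ProbabilityTheory
open scoped Classical

noncomputable section

namespace Quadtree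

section
open intervalIntegral

lemma sqrt17_mem : (4:ℝ) < Real.sqrt 17 ∧ Real.sqrt 17 < 5 := by
  constructor
  · rw [show (4:ℝ) = Real.sqrt 16 by rw [show (16:ℝ) = 4^2 by norm_num, Real.sqrt_sq]; norm_num]
    exact Real.sqrt_lt_sqrt (by norm_num) (by norm_num)
  · rw [Real.sqrt_lt' (by norm_num)]; norm_num

lemma betaQ_pos : 0 < betaQ := by
  have := sqrt17_mem.1; unfold betaQ; linarith

lemma betaQ_lt_one : betaQ < 1 := by
  have := sqrt17_mem.2; unfold betaQ; linarith

lemma bp1_pos : 0 < betaQ + 1 := by linarith [betaQ_pos]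

/-- generic integrability of bounded measurable functions on intervals -/
lemma intervalIntegrable_of_bdd {f : ℝ → ℝ} {a b M : ℝ} (hf : Measurable f)
    (hab : a ≤ b) (hM : ∀ v ∈ Set.Ioc a b, |f v| ≤ M) :
    IntervalIntegrable f volume a b := by
  rw [intervalIntegrable_iff_integrableOn_Ioc_of_le hab]
  refine Integrable.mono' (integrable_const M) hf.aestronglyMeasurable.restrict ?_
  exact (ae_restrict_iff' measurableSet_Ioc).2 (ae_of_all _ fun v hv => by
    simpa [Real.norm_eq_abs] using hM v hv)

lemma intable1 {y : ℝ → ℝ} (hy : Measurable y) {M : ℝ} (hM : ∀ x, |y x| ≤ M)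
    (s : ℝ) {a b : ℝ} (ha : 0 ≤ a) (hab : a ≤ b) (hb : b ≤ 1) :
    IntervalIntegrable (fun v => v ^ betaQ * y (s / v)) volume a b := by
  refine intervalIntegrable_of_bdd (M := M) (by fun_prop) hab fun v hv => ?_
  have hv0 : 0 ≤ v := le_trans ha hv.1.le
  have hv1 : v ≤ 1 := le_trans hv.2 hb
  rw [abs_mul]
  calc |v ^ betaQ| * |y (s / v)| ≤ 1 * M := by
        refine mul_le_mul ?_ (hM _) (abs_nonneg _) zero_le_one
        rw [abs_of_nonneg (Real.rpow_nonneg hv0 _)]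
        exact Real.rpow_le_one hv0 hv1 betaQ_pos.le
    _ = M := one_mul M

lemma intable2 {y : ℝ → ℝ} (hy : Measurable y) {M : ℝ} (hM : ∀ x, |y x| ≤ M)
    (s : ℝ) {a b : ℝ} (ha : 0 ≤ a) (hab : a ≤ b) (hb : b ≤ 1) :
    IntervalIntegrable (fun v => (1 - v) ^ betaQ * y ((s - v) / (1 - v))) volume a b := by
  refine intervalIntegrable_of_bdd (M := M) (by fun_prop) hab fun v hv => ?_
  have hv0 : 0 ≤ 1 - v := by linarith [le_trans hv.2 hb]
  have hv1 : 1 - v ≤ 1 := by linarith [lt_of_le_of_lt ha hv.1]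
  rw [abs_mul]
  calc |(1-v) ^ betaQ| * |y _| ≤ 1 * M := by
        refine mul_le_mul ?_ (hM _) (abs_nonneg _) zero_le_one
        rw [abs_of_nonneg (Real.rpow_nonneg hv0 _)]
        exact Real.rpow_le_one hv0 hv1 betaQ_pos.le
    _ = M := one_mul M

lemma integral_rpow_eval (a b : ℝ) :
    ∫ v in a..b, v ^ betaQ = (b ^ (betaQ+1) - a ^ (betaQ+1)) / (betaQ + 1) :=
  integral_rpow (Or.inl (by linarith [betaQ_pos]))

lemma integral_one_sub_rpow (a b : ℝ) :
    ∫ v in a..b, (1 - v) ^ betaQ = ((1-a)^(betaQ+1) - (1-b)^(betaQ+1)) / (betaQ+1) := by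
  have h := integral_comp_sub_left (a := a) (b := b) (fun w => w ^ betaQ) 1
  rw [h, integral_rpow_eval]

/-- `Gstar` only depends on values on `[0,1]`. -/
lemma gstar_congr {y₁ y₂ : ℝ → ℝ} (h : ∀ x ∈ Icc (0:ℝ) 1, y₁ x = y₂ x)
    {s : ℝ} (hs : s ∈ Icc (0:ℝ) 1) : Gstar y₁ s = Gstar y₂ s := by
  obtain ⟨hs0, hs1⟩ := hs
  have h1 : (∫ v in s..1, v ^ betaQ * y₁ (s / v))
      = ∫ v in s..1, v ^ betaQ * y₂ (s / v) := by
    refine integral_congr fun v hv => ?_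
    rw [uIcc_of_le hs1] at hv
    congr 1
    rcases eq_or_lt_of_le hs0 with hs0' | hs0'
    · rw [← hs0']; simp only [zero_div]; exact h 0 ⟨le_refl 0, zero_le_one⟩
    · have hvpos : 0 < v := lt_of_lt_of_le hs0' hv.1
      exact h _ ⟨div_nonneg hs0 hvpos.le, div_le_one_of_le₀ hv.1 hvpos.le⟩
  have h2 : (∫ v in (0:ℝ)..s, (1 - v) ^ betaQ * y₁ ((s - v) / (1 - v)))
      = ∫ v in (0:ℝ)..s, (1 - v) ^ betaQ * y₂ ((s - v) / (1 - v)) := by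
    refine integral_congr fun v hv => ?_
    rw [uIcc_of_le hs0] at hv
    congr 1
    rcases lt_or_ge v 1 with h1 | h1
    · exact h _ ⟨div_nonneg (by linarith [hv.2]) (by linarith),
        div_le_one_of_le₀ (by linarith [hs1]) (by linarith)⟩
    · have : v = 1 := le_antisymm (le_trans hv.2 hs1) h1
      have hs1' : s = 1 := le_antisymm hs1 (this ▸ hv.2)
      rw [this, hs1']
      simp [h 0 (by norm_num)]
  unfold Gstar
  rw [h1, h2]


lemma div_mem_Icc {s v : ℝ} (hs0 : 0 ≤ s) (hv : v ∈ Icc s 1) : s / v ∈ Icc (0:ℝ) 1 := by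
  rcases eq_or_lt_of_le hs0 with h | h
  · rw [← h, zero_div]; exact ⟨le_refl 0, zero_le_one⟩
  · have hvpos : 0 < v := lt_of_lt_of_le h hv.1
    exact ⟨div_nonneg hs0 hvpos.le, div_le_one_of_le₀ hv.1 hvpos.le⟩

lemma frac_mem_Icc {s v : ℝ} (hs1 : s ≤ 1) (hv : v ∈ Icc 0 s) :
    (s - v) / (1 - v) ∈ Icc (0:ℝ) 1 := by
  rcases lt_or_ge v 1 with h | h
  · exact ⟨div_nonneg (by linarith [hv.2]) (by linarith),
      div_le_one_of_le₀ (by linarith) (by linarith)⟩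
  · have hv1 : v = 1 := le_antisymm (le_trans hv.2 hs1) h
    have hs1' : s = 1 := le_antisymm hs1 (hv1 ▸ hv.2)
    rw [hv1, hs1']; norm_num

lemma abs_intervalIntegral_le {a b : ℝ} {g w : ℝ → ℝ} (hab : a ≤ b)
    (hg : IntervalIntegrable g volume a b) (hw : IntervalIntegrable w volume a b)
    (hbd : ∀ v ∈ Icc a b, |g v| ≤ w v) :
    |∫ v in a..b, g v| ≤ ∫ v in a..b, w v :=
  le_trans (abs_integral_le_integral_abs hab) (integral_mono_on hab hg.abs hw hbd)

def qconst : ℝ := 1 - (1/2 : ℝ) ^ (betaQ + 2)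

lemma qconst_nonneg : 0 ≤ qconst := by
  have : (1/2 : ℝ) ^ (betaQ + 2) ≤ 1 :=
    Real.rpow_le_one (by norm_num) (by norm_num) (by linarith [betaQ_pos])
  unfold qconst; linarith

lemma qconst_lt_one : qconst < 1 := by
  have : (0:ℝ) < (1/2 : ℝ) ^ (betaQ + 2) := Real.rpow_pos_of_pos (by norm_num) _
  unfold qconst; linarith

lemma intable_rpow_const (c : ℝ) {a b : ℝ} (ha : 0 ≤ a) (hab : a ≤ b) (hb : b ≤ 1) :
    IntervalIntegrable (fun v : ℝ => v ^ betaQ * c) volume a b := by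
  refine intervalIntegrable_of_bdd (M := |c|) (by fun_prop) hab fun v hv => ?_
  have h0 : (0:ℝ) ≤ v := le_trans ha hv.1.le
  rw [abs_mul, abs_of_nonneg (Real.rpow_nonneg h0 _)]
  nlinarith [Real.rpow_le_one h0 (le_trans hv.2 hb) betaQ_pos.le, abs_nonneg c,
    Real.rpow_nonneg h0 betaQ]

lemma intable_one_sub_rpow_const (c : ℝ) {a b : ℝ} (ha : 0 ≤ a) (hab : a ≤ b) (hb : b ≤ 1) :
    IntervalIntegrable (fun v : ℝ => (1 - v) ^ betaQ * c) volume a b := by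
  refine intervalIntegrable_of_bdd (M := |c|) (by fun_prop) hab fun v hv => ?_
  have h0 : (0:ℝ) ≤ 1 - v := by linarith [le_trans hv.2 hb]
  rw [abs_mul, abs_of_nonneg (Real.rpow_nonneg h0 _)]
  nlinarith [Real.rpow_le_one h0 (by linarith [lt_of_le_of_lt ha hv.1] : 1 - v ≤ 1) betaQ_pos.le, abs_nonneg c,
    Real.rpow_nonneg h0 betaQ]

/-- The key contraction estimate. -/
lemma gstar_diff_bound {y₁ y₂ : ℝ → ℝ} (h₁ : Measurable y₁) (h₂ : Measurable y₂)
    {M : ℝ} (hM₁ : ∀ x, |y₁ x| ≤ M) (hM₂ : ∀ x, |y₂ x| ≤ M)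
    {D : ℝ} (hD : ∀ x ∈ Icc (0:ℝ) 1, |y₁ x - y₂ x| ≤ D)
    {s : ℝ} (hs : s ∈ Icc (0:ℝ) 1) :
    |Gstar y₁ s - Gstar y₂ s| ≤ qconst * D := by
  obtain ⟨hs0, hs1⟩ := hs
  have hD0 : 0 ≤ D := le_trans (abs_nonneg _) (hD 0 ⟨le_refl 0, zero_le_one⟩)
  have i11 := intable1 h₁ hM₁ s hs0 hs1 (le_refl 1)
  have i12 := intable1 h₂ hM₂ s hs0 hs1 (le_refl 1)
  have i21 := intable2 h₁ hM₁ s (le_refl 0) hs0 hs1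
  have i22 := intable2 h₂ hM₂ s (le_refl 0) hs0 hs1
  have b1 : |(∫ v in s..1, v ^ betaQ * y₁ (s / v)) - ∫ v in s..1, v ^ betaQ * y₂ (s / v)|
      ≤ D * (1 - s ^ (betaQ+1)) / (betaQ+1) := by
    rw [← integral_sub i11 i12]
    have := abs_intervalIntegral_le hs1 (i11.sub i12) (intable_rpow_const D hs0 hs1 (le_refl 1))
      (fun v hv => by
        have h0 : (0:ℝ) ≤ v := le_trans hs0 hv.1
        rw [show v ^ betaQ * y₁ (s/v) - v ^ betaQ * y₂ (s/v)
            = v ^ betaQ * (y₁ (s/v) - y₂ (s/v)) by ring, abs_mul,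
          abs_of_nonneg (Real.rpow_nonneg h0 _)]
        exact mul_le_mul_of_nonneg_left (hD _ (div_mem_Icc hs0 hv))
          (Real.rpow_nonneg h0 _))
    rw [intervalIntegral.integral_mul_const, integral_rpow_eval, Real.one_rpow] at this
    calc _ ≤ (1 - s ^ (betaQ+1)) / (betaQ+1) * D := this
      _ = D * (1 - s ^ (betaQ+1)) / (betaQ+1) := by ring
  have b2 : |(∫ v in (0:ℝ)..s, (1-v) ^ betaQ * y₁ ((s-v)/(1-v)))
        - ∫ v in (0:ℝ)..s, (1-v) ^ betaQ * y₂ ((s-v)/(1-v))|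
      ≤ D * (1 - (1-s) ^ (betaQ+1)) / (betaQ+1) := by
    rw [← integral_sub i21 i22]
    have := abs_intervalIntegral_le hs0 (i21.sub i22) (intable_one_sub_rpow_const D (le_refl 0) hs0 hs1)
      (fun v hv => by
        have h0 : (0:ℝ) ≤ 1 - v := by linarith [hv.2]
        rw [show (1-v) ^ betaQ * y₁ ((s-v)/(1-v)) - (1-v) ^ betaQ * y₂ ((s-v)/(1-v))
            = (1-v) ^ betaQ * (y₁ ((s-v)/(1-v)) - y₂ ((s-v)/(1-v))) by ring, abs_mul,
          abs_of_nonneg (Real.rpow_nonneg h0 _)]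
        exact mul_le_mul_of_nonneg_left (hD _ (frac_mem_Icc hs1 hv))
          (Real.rpow_nonneg h0 _))
    rw [intervalIntegral.integral_mul_const, integral_one_sub_rpow] at this
    calc _ ≤ ((1-0) ^ (betaQ+1) - (1-s) ^ (betaQ+1)) / (betaQ+1) * D := this
      _ = D * (1 - (1-s) ^ (betaQ+1)) / (betaQ+1) := by
          rw [show (1:ℝ) - 0 = 1 by ring, Real.one_rpow]; ring
  have expand : Gstar y₁ s - Gstar y₂ s = ((betaQ+1)/2) *
      (((∫ v in s..1, v ^ betaQ * y₁ (s / v)) - ∫ v in s..1, v ^ betaQ * y₂ (s / v))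
      + ((∫ v in (0:ℝ)..s, (1-v) ^ betaQ * y₁ ((s-v)/(1-v)))
        - ∫ v in (0:ℝ)..s, (1-v) ^ betaQ * y₂ ((s-v)/(1-v)))) := by
    unfold Gstar; ring
  have habs : |Gstar y₁ s - Gstar y₂ s| ≤ ((betaQ+1)/2) *
      (D * (1 - s ^ (betaQ+1)) / (betaQ+1) + D * (1 - (1-s) ^ (betaQ+1)) / (betaQ+1)) := by
    rw [expand, abs_mul, abs_of_nonneg (by linarith [bp1_pos] : (0:ℝ) ≤ (betaQ+1)/2)]
    exact mul_le_mul_of_nonneg_left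
      (le_trans (abs_add_le _ _) (add_le_add b1 b2)) (by linarith [bp1_pos])
  -- numeric estimate
  have hsum : (1/2:ℝ) ^ (betaQ+1) ≤ s ^ (betaQ+1) + (1-s) ^ (betaQ+1) := by
    rcases le_total s (1/2) with h | h
    · have h1 : (1/2:ℝ) ^ (betaQ+1) ≤ (1-s) ^ (betaQ+1) :=
        Real.rpow_le_rpow (by norm_num) (by linarith) (by linarith [betaQ_pos])
      have h2 : (0:ℝ) ≤ s ^ (betaQ+1) := Real.rpow_nonneg hs0 _
      linarith
    · have h1 : (1/2:ℝ) ^ (betaQ+1) ≤ s ^ (betaQ+1) :=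
        Real.rpow_le_rpow (by norm_num) h (by linarith [betaQ_pos])
      have h2 : (0:ℝ) ≤ (1-s) ^ (betaQ+1) := Real.rpow_nonneg (by linarith) _
      linarith
  have hq : (1/2:ℝ) ^ (betaQ+2) = (1/2:ℝ) ^ (betaQ+1) * (1/2) := by
    rw [show betaQ+2 = (betaQ+1)+1 by ring, Real.rpow_add (by norm_num), Real.rpow_one]
  refine le_trans habs ?_
  unfold qconst
  rw [hq]
  have hb := bp1_pos
  have hbne : betaQ + 1 ≠ 0 := hb.ne'
  have key := mul_le_mul_of_nonneg_left hsum hD0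
  rw [show (betaQ+1)/2 * (D * (1 - s ^ (betaQ+1)) / (betaQ+1)
        + D * (1 - (1-s) ^ (betaQ+1)) / (betaQ+1))
      = D * (2 - (s ^ (betaQ+1) + (1-s) ^ (betaQ+1))) / 2 from by field_simp; ring]
  linarith [key]


/-- Lower bound for `Gstar`. -/
lemma gstar_lower {y : ℝ → ℝ} (hy : Measurable y) {M : ℝ} (hM : ∀ x, |y x| ≤ M)
    (h0 : ∀ x ∈ Icc (0:ℝ) 1, 0 ≤ y x) {s : ℝ} (hs : s ∈ Icc (0:ℝ) 1) :
    s ^ (betaQ + 1) / 2 ≤ Gstar y s := by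
  obtain ⟨hs0, hs1⟩ := hs
  have hI1 : 0 ≤ ∫ v in s..1, v ^ betaQ * y (s / v) :=
    intervalIntegral.integral_nonneg hs1 fun v hv =>
      mul_nonneg (Real.rpow_nonneg (le_trans hs0 hv.1) _) (h0 _ (div_mem_Icc hs0 hv))
  have hI2 : 0 ≤ ∫ v in (0:ℝ)..s, (1-v) ^ betaQ * y ((s-v)/(1-v)) :=
    intervalIntegral.integral_nonneg hs0 fun v hv =>
      mul_nonneg (Real.rpow_nonneg (by linarith [le_trans hv.2 hs1]) _)
        (h0 _ (frac_mem_Icc hs1 hv))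
  unfold Gstar
  nlinarith [bp1_pos]

/-- Upper bound for `Gstar`. -/
lemma gstar_upper {y : ℝ → ℝ} (hy : Measurable y) {M : ℝ} (hM : ∀ x, |y x| ≤ M)
    (h1 : ∀ x ∈ Icc (0:ℝ) 1, y x ≤ 1) {s : ℝ} (hs : s ∈ Icc (0:ℝ) 1) :
    Gstar y s ≤ 1 - (1 - s) ^ (betaQ + 1) / 2 := by
  obtain ⟨hs0, hs1⟩ := hs
  have hbne : betaQ + 1 ≠ 0 := bp1_pos.ne'
  have hI1 : (∫ v in s..1, v ^ betaQ * y (s / v)) ≤ (1 - s ^ (betaQ+1)) / (betaQ+1) := by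
    have := integral_mono_on hs1 (intable1 hy hM s hs0 hs1 (le_refl 1))
      (intable_rpow_const 1 hs0 hs1 (le_refl 1)) (fun v hv =>
        mul_le_mul_of_nonneg_left (h1 _ (div_mem_Icc hs0 hv))
          (Real.rpow_nonneg (le_trans hs0 hv.1) _))
    rwa [intervalIntegral.integral_mul_const, integral_rpow_eval, Real.one_rpow, mul_one] at this
  have hI2 : (∫ v in (0:ℝ)..s, (1-v) ^ betaQ * y ((s-v)/(1-v)))
      ≤ (1 - (1-s) ^ (betaQ+1)) / (betaQ+1) := by
    have := integral_mono_on hs0 (intable2 hy hM s (le_refl 0) hs0 hs1)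
      (intable_one_sub_rpow_const 1 (le_refl 0) hs0 hs1) (fun v hv =>
        mul_le_mul_of_nonneg_left (h1 _ (frac_mem_Icc hs1 hv))
          (Real.rpow_nonneg (by linarith [le_trans hv.2 hs1]) _))
    rwa [intervalIntegral.integral_mul_const, integral_one_sub_rpow, mul_one, sub_zero, Real.one_rpow] at this
  unfold Gstar
  have hb := bp1_pos
  have key : (betaQ+1)/2 * ((1 - s ^ (betaQ+1)) / (betaQ+1) + (1 - (1-s) ^ (betaQ+1)) / (betaQ+1))
      + s ^ (betaQ+1)/2 = 1 - (1-s) ^ (betaQ+1) / 2 := by field_simp; ring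
  nlinarith [hI1, hI2]

/-- Monotonicity decomposition for `Gstar`. -/
lemma gstar_mono_decomp {y : ℝ → ℝ} (hy : Measurable y) {M : ℝ} (hM : ∀ x, |y x| ≤ M)
    (h0 : ∀ x ∈ Icc (0:ℝ) 1, 0 ≤ y x) (h1 : ∀ x ∈ Icc (0:ℝ) 1, y x ≤ 1)
    (hmono : MonotoneOn y (Icc (0:ℝ) 1))
    {s₁ s₂ : ℝ} (hs0 : 0 ≤ s₁) (h12 : s₁ ≤ s₂) (hs1 : s₂ ≤ 1) :
    (betaQ+1)/2 * (∫ v in s₁..s₂, v ^ betaQ * (1 - y (s₁ / v))) ≤ Gstar y s₂ - Gstar y s₁ := by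
  have hs₁1 : s₁ ≤ 1 := le_trans h12 hs1
  have hs₂0 : 0 ≤ s₂ := le_trans hs0 h12
  have hbne : betaQ + 1 ≠ 0 := bp1_pos.ne'
  -- integrability
  have if₁full := intable1 hy hM s₁ hs0 hs₁1 (le_refl 1)
  have if₁a : IntervalIntegrable (fun v => v ^ betaQ * y (s₁ / v)) volume s₁ s₂ :=
    if₁full.mono_set (by rw [uIcc_of_le h12, uIcc_of_le hs₁1]; exact Icc_subset_Icc (le_refl _) hs1)
  have if₁b : IntervalIntegrable (fun v => v ^ betaQ * y (s₁ / v)) volume s₂ 1 :=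
    if₁full.mono_set (by rw [uIcc_of_le hs1, uIcc_of_le hs₁1]; exact Icc_subset_Icc h12 (le_refl _))
  have if₂ := intable1 hy hM s₂ hs₂0 hs1 (le_refl 1)
  have ig₂full := intable2 hy hM s₂ (le_refl 0) hs₂0 hs1
  have ig₂a : IntervalIntegrable (fun v => (1-v) ^ betaQ * y ((s₂-v)/(1-v))) volume 0 s₁ :=
    ig₂full.mono_set (by rw [uIcc_of_le hs0, uIcc_of_le hs₂0]; exact Icc_subset_Icc (le_refl _) h12)
  have ig₂b : IntervalIntegrable (fun v => (1-v) ^ betaQ * y ((s₂-v)/(1-v))) volume s₁ s₂ :=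
    ig₂full.mono_set (by rw [uIcc_of_le h12, uIcc_of_le hs₂0]; exact Icc_subset_Icc hs0 (le_refl _))
  have ig₁ := intable2 hy hM s₁ (le_refl 0) hs0 hs₁1
  -- splittings
  have split1 : (∫ v in s₁..1, v ^ betaQ * y (s₁ / v))
      = (∫ v in s₁..s₂, v ^ betaQ * y (s₁ / v)) + ∫ v in s₂..1, v ^ betaQ * y (s₁ / v) :=
    (integral_add_adjacent_intervals if₁a if₁b).symm
  have split2 : (∫ v in (0:ℝ)..s₂, (1-v) ^ betaQ * y ((s₂-v)/(1-v)))
      = (∫ v in (0:ℝ)..s₁, (1-v) ^ betaQ * y ((s₂-v)/(1-v)))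
        + ∫ v in s₁..s₂, (1-v) ^ betaQ * y ((s₂-v)/(1-v)) :=
    (integral_add_adjacent_intervals ig₂a ig₂b).symm
  -- the R identity
  have hR : (∫ v in s₁..s₂, v ^ betaQ * (1 - y (s₁ / v)))
      = (s₂ ^ (betaQ+1) - s₁ ^ (betaQ+1))/(betaQ+1) - ∫ v in s₁..s₂, v ^ betaQ * y (s₁ / v) := by
    rw [show (fun v => v ^ betaQ * (1 - y (s₁ / v)))
        = fun v => v ^ betaQ * 1 - v ^ betaQ * y (s₁ / v) from funext fun v => by ring]
    rw [integral_sub (intable_rpow_const 1 hs0 h12 hs1) if₁a]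
    rw [intervalIntegral.integral_mul_const, integral_rpow_eval, mul_one]
  -- nonneg terms
  have hA : (∫ v in s₂..1, v ^ betaQ * y (s₁ / v)) ≤ ∫ v in s₂..1, v ^ betaQ * y (s₂ / v) := by
    refine integral_mono_on hs1 if₁b if₂ fun v hv => ?_
    have harg : y (s₁ / v) ≤ y (s₂ / v) := by
      rcases eq_or_lt_of_le (le_trans hs₂0 hv.1) with h | h
      · have hv0 : v = 0 := h.symm
        have h2 : s₂ = 0 := le_antisymm (hv0 ▸ hv.1) hs₂0
        have h1' : s₁ = 0 := le_antisymm (h2 ▸ h12) hs0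
        rw [h1', h2]
      · exact hmono (div_mem_Icc hs0 ⟨le_trans h12 hv.1, hv.2⟩)
          (div_mem_Icc hs₂0 hv) (by gcongr)
    exact mul_le_mul_of_nonneg_left harg (Real.rpow_nonneg (le_trans hs₂0 hv.1) _)
  have hB : (∫ v in (0:ℝ)..s₁, (1-v) ^ betaQ * y ((s₁-v)/(1-v)))
      ≤ ∫ v in (0:ℝ)..s₁, (1-v) ^ betaQ * y ((s₂-v)/(1-v)) := by
    refine integral_mono_on hs0 ig₁ ig₂a fun v hv => ?_
    have harg : y ((s₁-v)/(1-v)) ≤ y ((s₂-v)/(1-v)) := by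
      rcases lt_or_ge v 1 with h | h
      · exact hmono (frac_mem_Icc hs₁1 hv) (frac_mem_Icc hs1 ⟨hv.1, le_trans hv.2 h12⟩)
          (by gcongr)
      · have hv1 : v = 1 := le_antisymm (le_trans hv.2 hs₁1) h
        have h11 : s₁ = 1 := le_antisymm hs₁1 (hv1 ▸ hv.2)
        have h21 : s₂ = 1 := le_antisymm hs1 (h11 ▸ h12)
        rw [h11, h21]
    exact mul_le_mul_of_nonneg_left harg (Real.rpow_nonneg (by linarith [le_trans hv.2 hs₁1]) _)
  have hC : 0 ≤ ∫ v in s₁..s₂, (1-v) ^ betaQ * y ((s₂-v)/(1-v)) :=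
    intervalIntegral.integral_nonneg h12 fun v hv =>
      mul_nonneg (Real.rpow_nonneg (by linarith [le_trans hv.2 hs1]) _)
        (h0 _ (frac_mem_Icc hs1 ⟨le_trans hs0 hv.1, hv.2⟩))
  -- assemble
  have hGdiff : Gstar y s₂ - Gstar y s₁ = (betaQ+1)/2 *
      (((∫ v in s₂..1, v ^ betaQ * y (s₂ / v)) - ∫ v in s₂..1, v ^ betaQ * y (s₁ / v))
      + ((∫ v in (0:ℝ)..s₁, (1-v) ^ betaQ * y ((s₂-v)/(1-v)))
          - ∫ v in (0:ℝ)..s₁, (1-v) ^ betaQ * y ((s₁-v)/(1-v)))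
      + (∫ v in s₁..s₂, (1-v) ^ betaQ * y ((s₂-v)/(1-v)))
      + (∫ v in s₁..s₂, v ^ betaQ * (1 - y (s₁ / v)))) := by
    unfold Gstar
    rw [split1, split2, hR]
    field_simp
    ring
  rw [hGdiff]
  have hle : (∫ v in s₁..s₂, v ^ betaQ * (1 - y (s₁ / v)))
      ≤ ((∫ v in s₂..1, v ^ betaQ * y (s₂ / v)) - ∫ v in s₂..1, v ^ betaQ * y (s₁ / v))
      + ((∫ v in (0:ℝ)..s₁, (1-v) ^ betaQ * y ((s₂-v)/(1-v)))
          - ∫ v in (0:ℝ)..s₁, (1-v) ^ betaQ * y ((s₁-v)/(1-v)))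
      + (∫ v in s₁..s₂, (1-v) ^ betaQ * y ((s₂-v)/(1-v)))
      + (∫ v in s₁..s₂, v ^ betaQ * (1 - y (s₁ / v))) := by linarith
  exact mul_le_mul_of_nonneg_left hle (by linarith [bp1_pos])


/-- Reflection identity for the second integral. -/
lemma gstar_I2_eq {y : ℝ → ℝ} (hsymm : ∀ x ∈ Icc (0:ℝ) 1, y x = 1 - y (1-x))
    {s : ℝ} (hs0 : 0 ≤ s) (hs1 : s ≤ 1) :
    (∫ v in (0:ℝ)..s, (1-v) ^ betaQ * y ((s-v)/(1-v)))
      = ∫ w in (1-s)..1, w ^ betaQ * (1 - y ((1-s)/w)) := by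
  have step1 : (∫ v in (0:ℝ)..s, (1-v) ^ betaQ * y ((s-v)/(1-v)))
      = ∫ v in (0:ℝ)..s, (fun w => w ^ betaQ * y ((s-1+w)/w)) (1 - v) := by
    refine integral_congr fun v _ => ?_
    simp only
    congr 2
    ring
  rw [step1, integral_comp_sub_left (fun w => w ^ betaQ * y ((s-1+w)/w)) 1, sub_zero]
  refine integral_congr fun w hw => ?_
  rw [uIcc_of_le (by linarith : 1 - s ≤ 1)] at hw
  rcases eq_or_lt_of_le (by linarith [hw.1] : (0:ℝ) ≤ w) with h | h
  · rw [← h, Real.zero_rpow betaQ_pos.ne', zero_mul, zero_mul]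
  · have harg : (s-1+w)/w = 1 - (1-s)/w := by field_simp; ring
    have hmem : (1 - (1-s)/w) ∈ Icc (0:ℝ) 1 := by
      constructor
      · have : (1-s)/w ≤ 1 := div_le_one_of_le₀ (by linarith [hw.1]) h.le
        linarith
      · have : 0 ≤ (1-s)/w := div_nonneg (by linarith) h.le
        linarith
    rw [harg, hsymm _ hmem]
    congr 2
    ring

/-- Symmetry of `Gstar`. -/
lemma gstar_symm {y : ℝ → ℝ} (hy : Measurable y) {M : ℝ} (hM : ∀ x, |y x| ≤ M)
    (hsymm : ∀ x ∈ Icc (0:ℝ) 1, y x = 1 - y (1-x))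
    {s : ℝ} (hs : s ∈ Icc (0:ℝ) 1) : Gstar y s + Gstar y (1-s) = 1 := by
  obtain ⟨hs0, hs1⟩ := hs
  have hbne : betaQ + 1 ≠ 0 := bp1_pos.ne'
  have key : ∀ t : ℝ, 0 ≤ t → t ≤ 1 →
      (∫ v in (0:ℝ)..t, (1-v) ^ betaQ * y ((t-v)/(1-v)))
        = (1 - (1-t) ^ (betaQ+1))/(betaQ+1) - ∫ v in (1-t)..1, v ^ betaQ * y ((1-t)/v) := by
    intro t ht0 ht1
    rw [gstar_I2_eq hsymm ht0 ht1]
    rw [show (fun w : ℝ => w ^ betaQ * (1 - y ((1-t)/w)))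
        = fun w => w ^ betaQ * 1 - w ^ betaQ * y ((1-t)/w) from funext fun w => by ring]
    rw [integral_sub (intable_rpow_const 1 (by linarith) (by linarith) (le_refl 1))
      (intable1 hy hM (1-t) (by linarith) (by linarith) (le_refl 1))]
    rw [intervalIntegral.integral_mul_const, integral_rpow_eval, Real.one_rpow, mul_one]
  have k1 := key s hs0 hs1
  have k2 := key (1-s) (by linarith) (by linarith)
  rw [show (1:ℝ) - (1-s) = s by ring] at k2
  unfold Gstar
  rw [k1, k2]
  field_simp
  ring

/-- Value of `Gstar` at `0`. -/
lemma gstar_zero (y : ℝ → ℝ) : Gstar y 0 = y 0 / 2 := by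
  unfold Gstar
  rw [intervalIntegral.integral_same]
  have : (∫ v in (0:ℝ)..1, v ^ betaQ * y (0 / v)) = ∫ v in (0:ℝ)..1, v ^ betaQ * y 0 := by
    refine integral_congr fun v _ => by rw [zero_div]
  rw [this, intervalIntegral.integral_mul_const, integral_rpow_eval, Real.one_rpow,
    Real.zero_rpow bp1_pos.ne']
  have hbne : betaQ + 1 ≠ 0 := bp1_pos.ne'
  field_simp
  ring


lemma continuous_rpow_bp1 : Continuous (fun s : ℝ => s ^ (betaQ + 1)) :=
  continuous_iff_continuousAt.2 fun x =>
    Real.continuousAt_rpow_const x _ (Or.inr (by linarith [bp1_pos]))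

/-- Continuity of `Gstar y` on `[0,1]` for continuous bounded `y`. -/
lemma gstar_continuousOn {y : ℝ → ℝ} (hy : Continuous y) {M : ℝ} (hM : ∀ x, |y x| ≤ M) :
    ContinuousOn (Gstar y) (Icc (0:ℝ) 1) := by
  set J1 : ℝ → ℝ := fun s => ∫ t in (0:ℝ)..1,
    ((1-s) * t + s) ^ betaQ * y (s / ((1-s) * t + s)) with hJ1def
  set J2 : ℝ → ℝ := fun s => ∫ t in (0:ℝ)..1,
    (1 - s * t) ^ betaQ * y ((s - s * t) / (1 - s * t)) with hJ2def
  have hJ1 : ContinuousOn J1 (Icc (0:ℝ) 1) := by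
    intro s₀ hs₀
    apply intervalIntegral.continuousWithinAt_of_dominated_interval (bound := fun _ => M)
    · exact Filter.Eventually.of_forall fun s =>
        (Measurable.aestronglyMeasurable (by fun_prop))
    · filter_upwards [self_mem_nhdsWithin] with s hs
      refine ae_of_all _ fun t ht => ?_
      rw [uIoc_of_le (by norm_num : (0:ℝ) ≤ 1)] at ht
      have h1t : 0 ≤ 1 - t := by linarith [ht.2]
      have hbase0 : 0 ≤ (1-s)*t + s := by nlinarith [hs.1, hs.2, ht.1.le]
      have hbase1 : (1-s)*t + s ≤ 1 := by nlinarith [hs.1, hs.2, ht.1.le]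
      rw [Real.norm_eq_abs, abs_mul, abs_of_nonneg (Real.rpow_nonneg hbase0 _)]
      calc _ ≤ 1 * M := mul_le_mul (Real.rpow_le_one hbase0 hbase1 betaQ_pos.le)
            (hM _) (abs_nonneg _) zero_le_one
        _ = M := one_mul M
    · exact intervalIntegrable_const
    · refine ae_of_all _ fun t ht => ?_
      rw [uIoc_of_le (by norm_num : (0:ℝ) ≤ 1)] at ht
      have hd : 0 < (1-s₀)*t + s₀ := by
        nlinarith [mul_nonneg (by linarith [hs₀.2] : (0:ℝ) ≤ 1-s₀) ht.1.le, ht.1, hs₀.1, hs₀.2]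
      have hdc : ContinuousAt (fun s => (1-s)*t + s) s₀ := by fun_prop
      have h1 : ContinuousAt (fun s => ((1-s)*t + s) ^ betaQ) s₀ :=
        hdc.rpow_const (Or.inl hd.ne')
      have h2 : ContinuousAt (fun s => s / ((1-s)*t + s)) s₀ :=
        continuousAt_id.div hdc hd.ne'
      exact (h1.mul (hy.continuousAt.comp h2)).continuousWithinAt
  have hJ2 : ContinuousOn J2 (Icc (0:ℝ) 1) := by
    intro s₀ hs₀
    apply intervalIntegral.continuousWithinAt_of_dominated_interval (bound := fun _ => M)
    · exact Filter.Eventually.of_forall fun s =>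
        (Measurable.aestronglyMeasurable (by fun_prop))
    · filter_upwards [self_mem_nhdsWithin] with s hs
      refine ae_of_all _ fun t ht => ?_
      rw [uIoc_of_le (by norm_num : (0:ℝ) ≤ 1)] at ht
      have hbase0 : 0 ≤ 1 - s*t := by nlinarith [hs.1, hs.2, ht.1.le, ht.2]
      have hbase1 : 1 - s*t ≤ 1 := by nlinarith [hs.1, ht.1.le]
      rw [Real.norm_eq_abs, abs_mul, abs_of_nonneg (Real.rpow_nonneg hbase0 _)]
      calc _ ≤ 1 * M := mul_le_mul (Real.rpow_le_one hbase0 hbase1 betaQ_pos.le)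
            (hM _) (abs_nonneg _) zero_le_one
        _ = M := one_mul M
    · exact intervalIntegrable_const
    · have hne : ∀ᵐ t : ℝ, t ≠ (1:ℝ) := by
        refine (ae_iff).2 ?_
        simp only [ne_eq, not_not]
        rw [show {t : ℝ | t = 1} = {(1:ℝ)} from rfl]
        exact measure_singleton 1
      filter_upwards [hne] with t ht1 ht
      rw [uIoc_of_le (by norm_num : (0:ℝ) ≤ 1)] at ht
      have htlt : t < 1 := lt_of_le_of_ne ht.2 ht1
      have hd : 0 < 1 - s₀*t := by nlinarith [hs₀.1, hs₀.2, ht.1]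
      have hdc : ContinuousAt (fun s => 1 - s*t) s₀ := by fun_prop
      have h1 : ContinuousAt (fun s => (1 - s*t) ^ betaQ) s₀ :=
        hdc.rpow_const (Or.inl hd.ne')
      have h2 : ContinuousAt (fun s => (s - s*t) / (1 - s*t)) s₀ :=
        ContinuousAt.div (by fun_prop) hdc hd.ne'
      exact (h1.mul (hy.continuousAt.comp h2)).continuousWithinAt
  have heq : ∀ s ∈ Icc (0:ℝ) 1,
      ((betaQ+1)/2) * ((1-s) * J1 s + s * J2 s) + s ^ (betaQ+1)/2 = Gstar y s := by
    intro s hs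
    have e1 : (1-s) * J1 s = ∫ v in s..1, v ^ betaQ * y (s / v) := by
      rcases eq_or_lt_of_le hs.2 with h1 | h1
      · rw [← h1]
        simp
      · have hne : (1:ℝ) - s ≠ 0 := by linarith
        have := integral_comp_mul_add (a := (0:ℝ)) (b := 1)
          (fun v => v ^ betaQ * y (s / v)) hne s
        rw [show (1-s) * 0 + s = s by ring, show (1-s) * 1 + s = 1 by ring] at this
        rw [hJ1def]
        simp only
        rw [this, smul_eq_mul, ← mul_assoc, mul_inv_cancel₀ hne, one_mul]
    have e2 : s * J2 s = ∫ v in (0:ℝ)..s, (1-v) ^ betaQ * y ((s-v)/(1-v)) := by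
      rcases eq_or_lt_of_le hs.1 with h0 | h0
      · rw [← h0]
        simp
      · have hne : s ≠ 0 := h0.ne'
        have := integral_comp_mul_left (a := (0:ℝ)) (b := 1)
          (fun v => (1-v) ^ betaQ * y ((s-v)/(1-v))) hne
        rw [mul_zero, mul_one] at this
        rw [hJ2def]
        simp only
        rw [this, smul_eq_mul, ← mul_assoc, mul_inv_cancel₀ hne, one_mul]
    unfold Gstar
    rw [e1, e2]
  refine ContinuousOn.congr ?_ fun s hs => (heq s hs).symm
  exact (continuousOn_const.mul (((continuousOn_const.sub continuousOn_id).mul hJ1).add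
    ((continuousOn_id).mul hJ2))).add ((continuous_rpow_bp1.continuousOn).div_const 2)


/-- Extension of a continuous function on `[0,1]` to `ℝ`. -/
def feC (f : C(Icc (0:ℝ) 1, ℝ)) : ℝ → ℝ := IccExtend zero_le_one f

lemma feC_cont (f : C(Icc (0:ℝ) 1, ℝ)) : Continuous (feC f) :=
  continuous_IccExtend_iff.2 f.continuous

lemma feC_meas (f : C(Icc (0:ℝ) 1, ℝ)) : Measurable (feC f) := (feC_cont f).measurable

lemma feC_bdd (f : C(Icc (0:ℝ) 1, ℝ)) : ∀ x, |feC f x| ≤ ‖f‖ := fun x => by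
  have := f.norm_coe_le_norm (projIcc 0 1 zero_le_one x)
  rw [Real.norm_eq_abs] at this
  exact this

lemma feC_mem (f : C(Icc (0:ℝ) 1, ℝ)) {x : ℝ} (hx : x ∈ Icc (0:ℝ) 1) :
    feC f x = f ⟨x, hx⟩ := IccExtend_of_mem _ _ hx

/-- The fixed point operator on `C([0,1],ℝ)`. -/
def Tmap (f : C(Icc (0:ℝ) 1, ℝ)) : C(Icc (0:ℝ) 1, ℝ) :=
  ⟨(Icc (0:ℝ) 1).restrict (Gstar (feC f)),
    ContinuousOn.restrict (gstar_continuousOn (feC_cont f) (feC_bdd f))⟩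

lemma Tmap_apply (f : C(Icc (0:ℝ) 1, ℝ)) (x : Icc (0:ℝ) 1) :
    Tmap f x = Gstar (feC f) x := rfl

lemma Tmap_dist_le (f g : C(Icc (0:ℝ) 1, ℝ)) :
    dist (Tmap f) (Tmap g) ≤ qconst * dist f g := by
  rw [ContinuousMap.dist_le (mul_nonneg qconst_nonneg dist_nonneg)]
  intro x
  rw [Real.dist_eq]
  refine gstar_diff_bound (feC_meas f) (feC_meas g) (M := max ‖f‖ ‖g‖)
    (fun z => le_trans (feC_bdd f z) (le_max_left _ _))
    (fun z => le_trans (feC_bdd g z) (le_max_right _ _))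
    (D := dist f g) (fun z hz => ?_) x.2
  rw [feC_mem f hz, feC_mem g hz, ← Real.dist_eq]
  exact ContinuousMap.dist_apply_le_dist _

def Kq : NNReal := ⟨qconst, qconst_nonneg⟩

lemma Tmap_contracting : ContractingWith Kq Tmap :=
  ⟨by exact_mod_cast qconst_lt_one, LipschitzWith.of_dist_le_mul Tmap_dist_le⟩

def σIcc (x : Icc (0:ℝ) 1) : Icc (0:ℝ) 1 :=
  ⟨1 - x.1, ⟨by linarith [x.2.2], by linarith [x.2.1]⟩⟩

def Sset : Set C(Icc (0:ℝ) 1, ℝ) :=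
  {f | Monotone f ∧ (∀ x, 0 ≤ f x) ∧ ∀ x, f x + f (σIcc x) = 1}

lemma Sset_closed : IsClosed Sset := by
  have h1 : IsClosed {f : C(Icc (0:ℝ) 1, ℝ) | Monotone f} := by
    have : {f : C(Icc (0:ℝ) 1, ℝ) | Monotone f}
        = ⋂ (x : Icc (0:ℝ) 1) (y : Icc (0:ℝ) 1) (_ : x ≤ y), {f | f x ≤ f y} := by
      ext f
      constructor
      · intro h
        exact mem_iInter.2 fun x => mem_iInter.2 fun y => mem_iInter.2 fun hxy => h hxy
      · intro h x y hxy
        exact mem_iInter.1 (mem_iInter.1 (mem_iInter.1 h x) y) hxy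
    rw [this]
    exact isClosed_iInter fun x => isClosed_iInter fun y => isClosed_iInter fun _ =>
      isClosed_le (continuous_eval_const x) (continuous_eval_const y)
  have h2 : IsClosed {f : C(Icc (0:ℝ) 1, ℝ) | ∀ x, 0 ≤ f x} := by
    have : {f : C(Icc (0:ℝ) 1, ℝ) | ∀ x, 0 ≤ f x} = ⋂ x, {f | 0 ≤ f x} := by ext f; simp
    rw [this]
    exact isClosed_iInter fun x =>
      isClosed_le continuous_const (continuous_eval_const x)
  have h3 : IsClosed {f : C(Icc (0:ℝ) 1, ℝ) | ∀ x, f x + f (σIcc x) = 1} := by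
    have : {f : C(Icc (0:ℝ) 1, ℝ) | ∀ x, f x + f (σIcc x) = 1}
        = ⋂ x, {f | f x + f (σIcc x) = 1} := by ext f; simp
    rw [this]
    exact isClosed_iInter fun x => isClosed_eq
      ((continuous_eval_const x).add
        (continuous_eval_const (σIcc x))) continuous_const
  exact h1.inter (h2.inter h3)

lemma Tmap_mem_Sset {f : C(Icc (0:ℝ) 1, ℝ)} (hf : f ∈ Sset) : Tmap f ∈ Sset := by
  obtain ⟨hmono, hpos, hsym⟩ := hf
  have hym := feC_meas f
  have hyb := feC_bdd f
  have hy0 : ∀ x, 0 ≤ feC f x := fun x => hpos _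
  have hle1 : ∀ z : Icc (0:ℝ) 1, f z ≤ 1 := fun z => by
    have h1 := hsym z; have h2 := hpos (σIcc z); linarith
  have hy1 : ∀ x, feC f x ≤ 1 := fun x => hle1 _
  have hymono : Monotone (feC f) := Monotone.IccExtend zero_le_one hmono
  have hysym : ∀ x ∈ Icc (0:ℝ) 1, feC f x = 1 - feC f (1-x) := by
    intro x hx
    have hx' : 1 - x ∈ Icc (0:ℝ) 1 := ⟨by linarith [hx.2], by linarith [hx.1]⟩
    rw [feC_mem f hx, feC_mem f hx']
    have h1 := hsym ⟨x, hx⟩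
    have hσ : σIcc ⟨x, hx⟩ = ⟨1-x, hx'⟩ := rfl
    rw [hσ] at h1; linarith
  refine ⟨?_, ?_, ?_⟩
  · intro a b hab
    have hab' : (a:ℝ) ≤ (b:ℝ) := Subtype.coe_le_coe.2 hab
    have h := gstar_mono_decomp hym hyb (fun x _ => hy0 x) (fun x _ => hy1 x)
      (hymono.monotoneOn _) a.2.1 hab' b.2.2
    have hnn : 0 ≤ ∫ v in (a:ℝ)..(b:ℝ), v ^ betaQ * (1 - feC f ((a:ℝ) / v)) :=
      intervalIntegral.integral_nonneg hab' fun v hv =>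
        mul_nonneg (Real.rpow_nonneg (le_trans a.2.1 hv.1) _) (by linarith [hy1 ((a:ℝ)/v)])
    show Gstar (feC f) ↑a ≤ Gstar (feC f) ↑b
    nlinarith [bp1_pos, mul_nonneg (by linarith [bp1_pos] : (0:ℝ) ≤ (betaQ+1)/2) hnn]
  · intro x
    show 0 ≤ Gstar (feC f) ↑x
    have h1 := gstar_lower hym hyb (fun z _ => hy0 z) x.2
    have h2 := Real.rpow_nonneg x.2.1 (betaQ+1)
    linarith
  · intro x
    show Gstar (feC f) ↑x + Gstar (feC f) (1 - ↑x) = 1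
    exact gstar_symm hym hyb hysym x.2

def ghat : C(Icc (0:ℝ) 1, ℝ) := ContractingWith.fixedPoint Tmap Tmap_contracting

lemma ghat_fixed : Tmap ghat = ghat := Tmap_contracting.fixedPoint_isFixedPt

lemma ghat_mem : ghat ∈ Sset := by
  have h0 : (ContinuousMap.const (Icc (0:ℝ) 1) (1/2 : ℝ)) ∈ Sset :=
    ⟨monotone_const, fun x => by norm_num, fun x => by norm_num⟩
  have hiter : ∀ n, (Tmap^[n]) (ContinuousMap.const (Icc (0:ℝ) 1) (1/2:ℝ)) ∈ Sset := by
    intro n; induction n with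
    | zero => exact h0
    | succ n ih => rw [Function.iterate_succ_apply']; exact Tmap_mem_Sset ih
  exact Sset_closed.mem_of_tendsto (Tmap_contracting.tendsto_iterate_fixedPoint _)
    (Filter.Eventually.of_forall hiter)


def gfun : ℝ → ℝ := feC ghat

lemma gfun_cont : Continuous gfun := feC_cont ghat

lemma gfun_meas : Measurable gfun := feC_meas ghat

lemma gfun_nonneg : ∀ x, 0 ≤ gfun x := fun x => ghat_mem.2.1 _

lemma gfun_le_one : ∀ x, gfun x ≤ 1 := by
  intro x
  have h1 := ghat_mem.2.2 (projIcc 0 1 zero_le_one x)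
  have h2 := ghat_mem.2.1 (σIcc (projIcc 0 1 zero_le_one x))
  show ghat (projIcc 0 1 zero_le_one x) ≤ 1
  linarith

lemma gfun_abs_le : ∀ x, |gfun x| ≤ 1 := fun x =>
  abs_le.2 ⟨by linarith [gfun_nonneg x], gfun_le_one x⟩

lemma gfun_mono : Monotone gfun := Monotone.IccExtend zero_le_one ghat_mem.1

lemma gfun_symm : ∀ x ∈ Icc (0:ℝ) 1, gfun x = 1 - gfun (1-x) := by
  intro x hx
  have hx' : 1 - x ∈ Icc (0:ℝ) 1 := ⟨by linarith [hx.2], by linarith [hx.1]⟩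
  unfold gfun
  rw [feC_mem ghat hx, feC_mem ghat hx']
  have h1 := ghat_mem.2.2 ⟨x, hx⟩
  have hσ : σIcc ⟨x, hx⟩ = ⟨1-x, hx'⟩ := rfl
  rw [hσ] at h1; linarith

lemma gfun_fixed : ∀ s ∈ Icc (0:ℝ) 1, gfun s = Gstar gfun s := by
  intro s hs
  have h1 : gfun s = ghat ⟨s, hs⟩ := feC_mem ghat hs
  have h2 : Tmap ghat ⟨s, hs⟩ = Gstar gfun s := rfl
  rw [h1, ← ghat_fixed, h2]

lemma gfun_zero : gfun 0 = 0 := by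
  have h := gfun_fixed 0 ⟨le_refl 0, zero_le_one⟩
  rw [gstar_zero] at h
  linarith

lemma gfun_one : gfun 1 = 1 := by
  have h := gfun_symm 1 ⟨zero_le_one, le_refl 1⟩
  rw [show (1:ℝ) - 1 = 0 by ring, gfun_zero] at h
  linarith

lemma gfun_pos : ∀ t ∈ Icc (0:ℝ) 1, 0 < t → 0 < gfun t := by
  intro t ht htpos
  have h1 := gstar_lower gfun_meas gfun_abs_le (fun x _ => gfun_nonneg x) ht
  have h2 : 0 < t ^ (betaQ+1) := Real.rpow_pos_of_pos htpos _
  rw [← gfun_fixed t ht] at h1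
  linarith

lemma gfun_lt_one : ∀ x ∈ Icc (0:ℝ) 1, x < 1 → gfun x < 1 := by
  intro x hx hx1
  have hx' : 1 - x ∈ Icc (0:ℝ) 1 := ⟨by linarith [hx.2], by linarith [hx.1]⟩
  have h1 := gfun_pos (1-x) hx' (by linarith)
  have h2 := gfun_symm x hx
  linarith

lemma gfun_strictMonoOn : StrictMonoOn gfun (Icc (0:ℝ) 1) := by
  intro a ha b hb hab
  have hdec := gstar_mono_decomp gfun_meas gfun_abs_le (fun x _ => gfun_nonneg x)
    (fun x _ => gfun_le_one x) (gfun_mono.monotoneOn _) ha.1 hab.le hb.2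
  rw [← gfun_fixed a ha, ← gfun_fixed b hb] at hdec
  have hposint : 0 < ∫ v in a..b, v ^ betaQ * (1 - gfun (a / v)) := by
    apply intervalIntegral.intervalIntegral_pos_of_pos_on
    · refine intervalIntegrable_of_bdd (M := 2)
        (by have := gfun_meas; fun_prop) hab.le fun v hv => ?_
      have hv0 : (0:ℝ) ≤ v := le_trans ha.1 hv.1.le
      have hv1 : v ≤ 1 := le_trans hv.2 hb.2
      rw [abs_mul, abs_of_nonneg (Real.rpow_nonneg hv0 _)]
      have e1 : v ^ betaQ ≤ 1 := Real.rpow_le_one hv0 hv1 betaQ_pos.le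
      have e2 : |1 - gfun (a/v)| ≤ 2 := by
        rw [abs_le]
        constructor <;> [linarith [gfun_le_one (a/v)]; linarith [gfun_nonneg (a/v)]]
      nlinarith [Real.rpow_nonneg hv0 betaQ, abs_nonneg (1 - gfun (a/v))]
    · intro v hv
      have hv0 : 0 < v := lt_of_le_of_lt ha.1 hv.1
      have harg1 : a / v < 1 := by rw [div_lt_one hv0]; exact hv.1
      have harg0 : 0 ≤ a / v := div_nonneg ha.1 hv0.le
      have h1 := gfun_lt_one (a/v) ⟨harg0, harg1.le⟩ harg1
      have h2 := Real.rpow_pos_of_pos hv0 betaQ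
      nlinarith
    · exact hab
  have := mul_pos (by linarith [bp1_pos] : (0:ℝ) < (betaQ+1)/2) hposint
  linarith

end

/-- There is exactly one bounded Borel-measurable function
`g : [0,1] → ℝ` with `g = G*(g)`; it is continuous, monotonically increasing, a bijection
of `[0,1]` onto `[0,1]`, and satisfies `g(s) = 1 − g(1−s)` for all `s ∈ [0,1]`. -/
theorem stmt19 :
    ∃ g : ℝ → ℝ,
      (Measurable ((Icc (0:ℝ) 1).restrict g) ∧
        (∃ M : ℝ, ∀ s ∈ Icc (0:ℝ) 1, |g s| ≤ M) ∧
        ∀ s ∈ Icc (0:ℝ) 1, g s = Gstar g s) ∧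
      (∀ g' : ℝ → ℝ,
        Measurable ((Icc (0:ℝ) 1).restrict g') →
        (∃ M : ℝ, ∀ s ∈ Icc (0:ℝ) 1, |g' s| ≤ M) →
        (∀ s ∈ Icc (0:ℝ) 1, g' s = Gstar g' s) →
        ∀ s ∈ Icc (0:ℝ) 1, g' s = g s) ∧
      ContinuousOn g (Icc (0:ℝ) 1) ∧
      MonotoneOn g (Icc (0:ℝ) 1) ∧
      BijOn g (Icc (0:ℝ) 1) (Icc (0:ℝ) 1) ∧
      ∀ s ∈ Icc (0:ℝ) 1, g s = 1 - g (1 - s) := by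
  refine ⟨gfun, ⟨gfun_meas.comp measurable_subtype_coe, ⟨1, fun s _ => gfun_abs_le s⟩,
    gfun_fixed⟩, ?_, gfun_cont.continuousOn, gfun_mono.monotoneOn _, ?_, gfun_symm⟩
  · -- uniqueness
    intro g' hmeas' hbdd' hfix' s hs
    obtain ⟨M', hM'⟩ := hbdd'
    set y' : ℝ → ℝ :=
      fun x => if hx : x ∈ Icc (0:ℝ) 1 then (Icc (0:ℝ) 1).restrict g' ⟨x, hx⟩ else 0 with hy'def
    have hy'meas : Measurable y' := Measurable.dite hmeas' measurable_const measurableSet_Icc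
    have hy'eq : ∀ x ∈ Icc (0:ℝ) 1, y' x = g' x := fun x hx => by
      rw [hy'def]; simp only [dif_pos hx]; rfl
    have hM'0 : 0 ≤ M' := le_trans (abs_nonneg _) (hM' 0 ⟨le_refl 0, zero_le_one⟩)
    have hy'b : ∀ x, |y' x| ≤ max M' 1 := by
      intro x
      by_cases hx : x ∈ Icc (0:ℝ) 1
      · rw [hy'eq x hx]; exact le_trans (hM' x hx) (le_max_left _ _)
      · rw [hy'def]; simp only [dif_neg hx, abs_zero]; positivity
    have hgb' : ∀ x, |gfun x| ≤ max M' 1 := fun x =>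
      le_trans (gfun_abs_le x) (le_max_right _ _)
    set F : ℝ → ℝ := fun t => |g' t - gfun t| with hFdef
    have hFnonneg : ∀ t, 0 ≤ F t := fun t => abs_nonneg _
    have hbddF : BddAbove (F '' Icc (0:ℝ) 1) := by
      refine ⟨M' + 1, fun r hr => ?_⟩
      obtain ⟨x, hx, rfl⟩ := hr
      calc F x ≤ |g' x| + |gfun x| := abs_sub _ _
        _ ≤ M' + 1 := add_le_add (hM' x hx) (gfun_abs_le x)
    have hne : (F '' Icc (0:ℝ) 1).Nonempty := ⟨F 0, 0, ⟨le_refl 0, zero_le_one⟩, rfl⟩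
    set D := sSup (F '' Icc (0:ℝ) 1) with hDdef
    have hD_le : ∀ x ∈ Icc (0:ℝ) 1, F x ≤ D := fun x hx => le_csSup hbddF ⟨x, hx, rfl⟩
    have hcontr : ∀ x ∈ Icc (0:ℝ) 1, F x ≤ qconst * D := by
      intro x hx
      have h1 : g' x = Gstar y' x := by
        rw [hfix' x hx]
        exact gstar_congr (fun z hz => (hy'eq z hz).symm) hx
      have h2 := gstar_diff_bound hy'meas gfun_meas hy'b hgb' (D := D)
        (fun z hz => by rw [hy'eq z hz]; exact hD_le z hz) hx
      rw [hFdef]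
      simp only
      rw [h1, gfun_fixed x hx]
      exact h2
    have hDle : D ≤ qconst * D := csSup_le hne fun r hr => by
      obtain ⟨x, hx, rfl⟩ := hr; exact hcontr x hx
    have hD0 : 0 ≤ D := le_trans (hFnonneg 0) (hD_le 0 ⟨le_refl 0, zero_le_one⟩)
    have hDzero : D ≤ 0 := by nlinarith [qconst_lt_one]
    have hFs := hD_le s hs
    have : |g' s - gfun s| ≤ 0 := le_trans hFs hDzero
    have := abs_nonneg (g' s - gfun s)
    have heq0 : |g' s - gfun s| = 0 := le_antisymm ‹_› ‹_›
    have := abs_eq_zero.1 heq0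
    linarith [sub_eq_zero.1 this]
  · -- BijOn
    refine ⟨fun x _ => ⟨gfun_nonneg x, gfun_le_one x⟩, gfun_strictMonoOn.injOn, ?_⟩
    intro t ht
    have h := intermediate_value_Icc zero_le_one gfun_cont.continuousOn
    rw [gfun_zero, gfun_one] at h
    exact h ht



end Quadtree
end
end
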